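/- arXiv:2110.09340 — 4 statements merged into one kernel-verified Lean document; each statement's English description precedes it below -/
import Mathlib

section
/- Let d ≥ 2 be an integer, c ∈ ℂ, P(t) = t^d + c, and z_i = P^{∘i}(0) for i ≥ 1, and let ξ = e^{2πi/d}. Fix i ≥ 1 with z_i ≠ 0. Then for every z ∈ ℂ with z ≠ z_1 and z ≠ z_{i+1}, and every w ∈ ℂ with w^d = z − z_1, one has ∑_{j=0}^{d−1} 1/((ξ^j w − z_i)·(d·(ξ^j w)^{d−1})^2) = (1/(d·z_i^{d−1}))·(1/(z − z_{i+1}) − 1/(z − z_1)). -/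
noncomputable section

/-- Model of the space `𝓔 = ℂ^{ℕ*}` of complex sequences `(x_i)_{i ≥ 1}`:
functions `ℕ → ℂ` with a dummy coordinate `x 0` which encodes the convention `x₀ := 0`. -/
abbrev Eseq : Type := ℕ → ℂ

/-- The submodule of `ℕ → ℂ` corresponding to `𝓔` (dummy coordinate `0` vanishes). -/
def E0 : Submodule ℂ Eseq where
  carrier := {x | x 0 = 0}
  add_mem' := by
    rintro a b ha hb
    simp only [Set.mem_setOf_eq, Pi.add_apply] at *
    rw [ha, hb]; ring
  zero_mem' := rfl
  smul_mem' := by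
    rintro c a ha
    simp only [Set.mem_setOf_eq, Pi.smul_apply] at *
    rw [ha, smul_zero]

/-- `𝓛`: the subspace of constant sequences. -/
def Lconst : Submodule ℂ Eseq where
  carrier := {x | x 0 = 0 ∧ ∀ i, 1 ≤ i → x i = x 1}
  add_mem' := by
    rintro a b ⟨ha0, ha⟩ ⟨hb0, hb⟩
    exact ⟨by simp [ha0, hb0], fun i hi => by simp only [Pi.add_apply, ha i hi, hb i hi]⟩
  zero_mem' := ⟨rfl, fun i _ => rfl⟩
  smul_mem' := by
    rintro c a ⟨ha0, ha⟩
    exact ⟨by simp [ha0], fun i hi => by simp only [Pi.smul_apply, ha i hi]⟩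

/-- `ℋ_{k,m} = {x ∈ 𝓔 : β x_{k+m} − x_k = 0}` (convention `x₀ := 0`). -/
def Hspace (β : ℂ) (k m : ℕ) : Submodule ℂ Eseq where
  carrier := {x | x 0 = 0 ∧ β * x (k + m) - x k = 0}
  add_mem' := by
    rintro a b ⟨ha0, ha⟩ ⟨hb0, hb⟩
    refine ⟨by simp [ha0, hb0], ?_⟩
    simp only [Pi.add_apply]
    linear_combination ha + hb
  zero_mem' := ⟨rfl, by simp⟩
  smul_mem' := by
    rintro c a ⟨ha0, ha⟩
    refine ⟨by simp [ha0], ?_⟩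
    simp only [Pi.smul_apply, smul_eq_mul]
    linear_combination c * ha

/-- `𝓟_{k,m} = {x ∈ 𝓔 : x_{i+m} = x_i for all i ≥ k+1}`. -/
def Pspace (k m : ℕ) : Submodule ℂ Eseq where
  carrier := {x | x 0 = 0 ∧ ∀ i, k + 1 ≤ i → x (i + m) = x i}
  add_mem' := by
    rintro a b ⟨ha0, ha⟩ ⟨hb0, hb⟩
    exact ⟨by simp [ha0, hb0], fun i hi => by simp only [Pi.add_apply, ha i hi, hb i hi]⟩
  zero_mem' := ⟨rfl, fun i _ => rfl⟩
  smul_mem' := by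
    rintro c a ⟨ha0, ha⟩
    exact ⟨by simp [ha0], fun i hi => by simp only [Pi.smul_apply, ha i hi]⟩

/-- `ℳ_{k,m} = 𝓟_{k,m} ∩ ℋ_{k,m}`. -/
def Mspace (β : ℂ) (k m : ℕ) : Submodule ℂ Eseq := Pspace k m ⊓ Hspace β k m

/-- `Q : 𝓔 → 𝓔`, `Q(x)_1 = 0`, `Q(x)_i = x_{i-1}^d` for `i ≥ 2`. -/
def Qmap (d : ℕ) (x : Eseq) : Eseq := fun i => if 2 ≤ i then (x (i - 1)) ^ d else 0

/-- The constant subtracted by the projection `π_{k,m}` onto `ℋ_{k,m}` parallel to `𝓛`. -/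
def kappa (β : ℂ) (k m : ℕ) (x : Eseq) : ℂ :=
  if k = 0 then x m else (β * x (k + m) - x k) / (β - 1)

/-- `π_{k,m} : 𝓔 → 𝓔`, the projection onto `ℋ_{k,m}` parallel to `𝓛`. -/
def projH (β : ℂ) (k m : ℕ) (x : Eseq) : Eseq :=
  fun i => if i = 0 then 0 else x i - kappa β k m x

/-- `F_{k,m} = π_{k,m} ∘ Q`. -/
def Fmap (β : ℂ) (d k m : ℕ) (x : Eseq) : Eseq := projH β k m (Qmap d x)

/-- The coordinate linear form `ω_i` on `ℳ_{k,m}`. -/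
def omegaForm (β : ℂ) (k m : ℕ) (i : ℕ) : Module.Dual ℂ (Mspace β k m) where
  toFun v := (v : Eseq) i
  map_add' a b := rfl
  map_smul' c a := rfl

/-- `L` is the derivative `D_x F_{k,m} : ℳ_{k,m} → ℳ_{k,m}` of `F_{k,m}` at `x`:
in every direction `v ∈ ℳ_{k,m}` and coordinate `i`, `L v` is the derivative at `t = 0`
of `t ↦ F_{k,m}(x + t v)_i`. -/
def IsDerivAt (β : ℂ) (d k m : ℕ) (x : Eseq)
    (L : Mspace β k m →ₗ[ℂ] Mspace β k m) : Prop :=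
  ∀ v : Mspace β k m, ∀ i : ℕ,
    ((L v : Eseq) i) = deriv (fun t : ℂ => Fmap β d k m (x + t • (v : Eseq)) i) 0

/-- The critical set `C(F_{k,m})`: points of `ℳ_{k,m}` where the derivative is not invertible. -/
def CsetD (β : ℂ) (d k m : ℕ) : Set Eseq :=
  {x | x ∈ Mspace β k m ∧
    ∀ L : Mspace β k m →ₗ[ℂ] Mspace β k m, IsDerivAt β d k m x L → ¬ Function.Bijective L}

/-- The post-critical set `PC(F_{k,m}) = ⋃_{j ≥ 1} F_{k,m}^{∘j}(C(F_{k,m}))`. -/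
def PCsetD (β : ℂ) (d k m : ℕ) : Set Eseq :=
  ⋃ j : ℕ, ⋃ _ : 1 ≤ j, (Fmap β d k m)^[j] '' CsetD β d k m

/-- `Δ_{k,m} = {x ∈ ℳ_{k,m} : x_i = x_j for some 1 ≤ i < j ≤ k+m}`. -/
def Delta (β : ℂ) (k m : ℕ) : Set Eseq :=
  {x | x ∈ Mspace β k m ∧ ∃ i j : ℕ, 1 ≤ i ∧ i < j ∧ j ≤ k + m ∧ x i = x j}

/-- Coordinates of a point of `ℂ^n`, indexed from `1` to `n`, with the convention `x₀ := 0`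
(and value `0` out of range). -/
def coordFin {n : ℕ} (x : Fin n → ℂ) (i : ℕ) : ℂ :=
  if h : 1 ≤ i ∧ i ≤ n then x ⟨i - 1, by omega⟩ else 0

/-- The Koch map `G_{k,m} : ℂ^{k+m-1} → ℂ^{k+m-1}`. -/
def Gmap (β : ℂ) (d k m : ℕ) (x : Fin (k + m - 1) → ℂ) : Fin (k + m - 1) → ℂ :=
  if k = 0 then
    fun j => (coordFin x j.1) ^ d - (coordFin x (m - 1)) ^ d
  else
    fun j =>
      (coordFin x j.1 - (β * coordFin x (k + m - 1) - coordFin x (k - 1)) / (β - 1)) ^ d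

/-- The critical set `C(G_{k,m})`: points where the derivative is not invertible. -/
def Gcrit (β : ℂ) (d k m : ℕ) : Set (Fin (k + m - 1) → ℂ) :=
  {z | ¬ Function.Bijective (fderiv ℂ (Gmap β d k m) z)}

/-- The post-critical set `PC(G_{k,m}) = ⋃_{j ≥ 1} G_{k,m}^{∘j}(C(G_{k,m}))`. -/
def GPC (β : ℂ) (d k m : ℕ) : Set (Fin (k + m - 1) → ℂ) :=
  ⋃ j : ℕ, ⋃ _ : 1 ≤ j, (Gmap β d k m)^[j] '' Gcrit β d k m

/-- The polynomial `P_z` associated to a point `z ∈ ℂ^{k+m-1}`. -/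
def Ppoly (β : ℂ) (d k m : ℕ) (z : Fin (k + m - 1) → ℂ) : ℂ → ℂ :=
  if k = 0 then fun t => t ^ d - (coordFin z (m - 1)) ^ d
  else fun t => (t - (β * coordFin z (k + m - 1) - coordFin z (k - 1)) / (β - 1)) ^ d

/-- the pushforward identity for the quadratic differentials
`Q_i = dt²/(t − z_i)` under `P(t) = t^d + c`, in algebraic form. -/
theorem stmt16 (d : ℕ) (hd : 2 ≤ d) (c : ℂ)
    (P : ℂ → ℂ) (hP : P = fun t : ℂ => t ^ d + c)
    (zs : ℕ → ℂ) (hzs : ∀ n : ℕ, zs n = P^[n] 0)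
    (ξ : ℂ) (hξ : ξ = Complex.exp (2 * Real.pi * Complex.I / d))
    (i : ℕ) (hi : 1 ≤ i) (hzi : zs i ≠ 0)
    (z : ℂ) (hz1 : z ≠ zs 1) (hzi1 : z ≠ zs (i + 1))
    (w : ℂ) (hw : w ^ d = z - zs 1) :
    ∑ j ∈ Finset.range d,
      1 / ((ξ ^ j * w - zs i) * ((d : ℂ) * (ξ ^ j * w) ^ (d - 1)) ^ 2) =
    (1 / ((d : ℂ) * zs i ^ (d - 1))) *
      (1 / (z - zs (i + 1)) - 1 / (z - zs 1)) := by

  have hdne : (d : ℕ) ≠ 0 := by omega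
  have hd0 : (d : ℂ) ≠ 0 := Nat.cast_ne_zero.mpr hdne
  have hprim : IsPrimitiveRoot ξ d := by
    rw [hξ]; exact Complex.isPrimitiveRoot_exp d hdne
  set a := zs i with ha
  -- basic facts
  have hc : zs 1 = c := by
    rw [hzs 1, Function.iterate_one, hP]
    simp [zero_pow hdne]
  have hzip : zs (i + 1) = a ^ d + c := by
    rw [ha, hzs (i+1), hzs i, Function.iterate_succ_apply', hP]
  have hA0 : w ^ d ≠ 0 := by rw [hw]; exact sub_ne_zero.mpr hz1
  have hw0 : w ≠ 0 := fun h => hA0 (by rw [h, zero_pow hdne])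
  have hξ0 : ξ ≠ 0 := hprim.ne_zero hdne
  have hxd : ξ ^ d = 1 := hprim.pow_eq_one
  have hzeta : ∀ j : ℕ, (ξ ^ j * w) ^ d = w ^ d := by
    intro j
    rw [mul_pow, ← pow_mul, mul_comm j d, pow_mul, hxd, one_pow, one_mul]
  have hB : w ^ d - a ^ d = z - zs (i + 1) := by
    rw [hw, hzip, hc]; ring
  have hB0 : w ^ d - a ^ d ≠ 0 := by rw [hB]; exact sub_ne_zero.mpr hzi1
  have hza : ∀ j : ℕ, ξ ^ j * w - a ≠ 0 := by
    intro j h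
    have : (ξ ^ j * w) ^ d = a ^ d := by rw [sub_eq_zero.mp h]
    exact hB0 (by rw [← hzeta j, this, sub_self])
  have hz0 : ∀ j : ℕ, ξ ^ j * w ≠ 0 := fun j => mul_ne_zero (pow_ne_zero j hξ0) hw0
  -- sum of powers of roots of unity
  have hsum_pow : ∀ t : ℕ, 1 ≤ t → t < d → ∑ j ∈ Finset.range d, (ξ ^ j) ^ t = 0 := by
    intro t h1 h2
    have hx1 : ξ ^ t ≠ 1 := hprim.pow_ne_one_of_pos_of_lt (by omega) h2
    have : ∑ j ∈ Finset.range d, (ξ ^ t) ^ j = ((ξ ^ t) ^ d - 1) / (ξ ^ t - 1) :=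
      geom_sum_eq hx1 d
    rw [← pow_mul, mul_comm t d, pow_mul, hxd, one_pow, sub_self, zero_div] at this
    calc ∑ j ∈ Finset.range d, (ξ ^ j) ^ t = ∑ j ∈ Finset.range d, (ξ ^ t) ^ j := by
          refine Finset.sum_congr rfl fun j _ => ?_
          rw [← pow_mul, ← pow_mul, mul_comm]
      _ = 0 := this
  -- key reciprocal sum
  have hS : ∑ j ∈ Finset.range d, 1 / (ξ ^ j * w - a)
      = (d : ℂ) * a ^ (d - 1) / (w ^ d - a ^ d) := by
    have h1 : ∀ j ∈ Finset.range d, 1 / (ξ ^ j * w - a)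
        = (∑ t ∈ Finset.range d, (ξ ^ j * w) ^ t * a ^ (d - 1 - t)) / (w ^ d - a ^ d) := by
      intro j _
      rw [eq_div_iff hB0]
      have hg := geom_sum₂_mul (ξ ^ j * w) a d
      rw [← hzeta j, ← hg]
      field_simp [hza j]
    rw [Finset.sum_congr rfl h1, ← Finset.sum_div]
    congr 1
    rw [Finset.sum_comm]
    rw [Finset.sum_eq_single 0]
    · simp [Finset.sum_const, Finset.card_range]
    · intro t ht ht0
      have h0 := hsum_pow t (Nat.one_le_iff_ne_zero.mpr ht0) (Finset.mem_range.mp ht)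
      calc ∑ j ∈ Finset.range d, (ξ ^ j * w) ^ t * a ^ (d - 1 - t)
          = (∑ j ∈ Finset.range d, (ξ ^ j) ^ t) * (w ^ t * a ^ (d - 1 - t)) := by
            rw [Finset.sum_mul]
            exact Finset.sum_congr rfl fun j _ => by rw [mul_pow]; ring
        _ = 0 := by rw [h0, zero_mul]
    · intro h; exact absurd (Finset.mem_range.mpr (by omega)) h
  -- termwise decomposition of the main sum
  have key : ∀ j ∈ Finset.range d,
      1 / ((ξ ^ j * w - a) * ((d:ℂ) * (ξ ^ j * w) ^ (d - 1)) ^ 2)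
      = (ξ ^ j * w + a) / ((d:ℂ)^2 * (w^d)^2)
        + a^2 / ((d:ℂ)^2 * (w^d)^2) * (1 / (ξ ^ j * w - a)) := by
    intro j _
    have h1 := hza j
    have hu : (ξ ^ j * w) ^ (d-1) * (ξ ^ j * w) = w ^ d := by
      rw [← pow_succ, Nat.sub_add_cancel (by omega : 1 ≤ d), hzeta j]
    generalize ξ ^ j * w = u at h1 hu ⊢
    have hu0 : u ≠ 0 := by
      rintro rfl
      rw [mul_zero] at hu
      exact hA0 hu.symm
    have hD : ((d:ℂ)^2 * (w^d)^2) ≠ 0 := mul_ne_zero (pow_ne_zero _ hd0) (pow_ne_zero _ hA0)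
    have hden : (u - a) * ((d:ℂ) * u ^ (d-1))^2 ≠ 0 :=
      mul_ne_zero h1 (pow_ne_zero _ (mul_ne_zero hd0 (pow_ne_zero _ hu0)))
    rw [mul_one_div, div_div, div_add_div _ _ hD (mul_ne_zero hD h1),
      div_eq_div_iff hden (mul_ne_zero hD (mul_ne_zero hD h1))]
    linear_combination (-((d:ℂ)^2*(w^d)^2 * (d:ℂ)^2 * (u-a) * (w^d + u^(d-1)*u))) * hu
  rw [Finset.sum_congr rfl key, Finset.sum_add_distrib, ← Finset.mul_sum, hS, hB,
    ← Finset.sum_div, Finset.sum_add_distrib, Finset.sum_const, Finset.card_range]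
  have hgs : ∑ j ∈ Finset.range d, ξ ^ j * w = 0 := by
    rw [← Finset.sum_mul, hprim.geom_sum_eq_zero (by omega), zero_mul]
  rw [hgs, nsmul_eq_mul]
  have hrel : z - zs 1 - (z - zs (i+1)) = a ^ (d-1) * a := by
    rw [hzip, hc, ← pow_succ, Nat.sub_add_cancel (by omega : 1 ≤ d)]
    ring
  have hBne : z - zs (i+1) ≠ 0 := sub_ne_zero.mpr hzi1
  have hAne : z - zs 1 ≠ 0 := sub_ne_zero.mpr hz1
  have hane : a ^ (d-1) ≠ 0 := pow_ne_zero _ hzi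
  rw [hw]
  field_simp
  linear_combination (-((d:ℂ) * a * a ^ (d-1) + (d:ℂ) * (z - zs 1))) * hrel
end
end

section
/- Let (k,m) ∈ ℕ × ℕ* and let m' ∈ ℕ* divide both k and m (so that ℳ_{0,m'} ⊆ ℳ_{k,m}). For i ≥ 1, define α_i = ω_i − ω_{i+m'} ∈ ℳ_{k,m}^*. Then the annihilator ℳ_{0,m'}^0 = {ω ∈ ℳ_{k,m}^* : ω vanishes identically on ℳ_{0,m'}} equals the span of {α_i : 1 ≤ i ≤ k+m}. -/
noncomputable section

/-- the annihilator of `ℳ_{0,m'}` in `ℳ_{k,m}^*` is spanned by the forms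
`α_i = ω_i − ω_{i+m'}`, `1 ≤ i ≤ k+m`. -/
theorem stmt17 (d : ℕ) (hd : 2 ≤ d) (β : ℂ) (hβd : β ^ d = 1) (hβ1 : β ≠ 1)
    (k m m' : ℕ) (hm : 1 ≤ m) (hm' : 1 ≤ m') (hk : m' ∣ k) (hmm : m' ∣ m) :
    ((Mspace β 0 m').comap (Mspace β k m).subtype).dualAnnihilator =
      Submodule.span ℂ
        ((fun i => omegaForm β k m i - omegaForm β k m (i + m')) '' (Set.Icc 1 (k + m))) := by
  classical
  have hβ0 : β ≠ 0 := by
    intro h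
    rw [h, zero_pow (by omega)] at hβd
    exact zero_ne_one hβd
  set S : Set (Module.Dual ℂ (Mspace β k m)) :=
    (fun i => omegaForm β k m i - omegaForm β k m (i + m')) '' (Set.Icc 1 (k + m)) with hS
  have hSfin : S.Finite := (Set.finite_Icc _ _).image _
  haveI : FiniteDimensional ℂ (Submodule.span ℂ S) := FiniteDimensional.span_of_finite ℂ hSfin
  have key : (Submodule.span ℂ S).dualCoannihilator
      = (Mspace β 0 m').comap (Mspace β k m).subtype := by
    ext v
    obtain ⟨⟨hv0, hper⟩, -, hH⟩ := v.2
    rw [Submodule.mem_dualCoannihilator]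
    constructor
    · intro h
      -- the α_i vanish on v, for 1 ≤ i ≤ k+m
      have hv : ∀ i, 1 ≤ i → i ≤ k + m → (v : Eseq) (i + m') = (v : Eseq) i := by
        intro i h1 h2
        have h3 := h _ (Submodule.subset_span ⟨i, ⟨h1, h2⟩, rfl⟩)
        rw [LinearMap.sub_apply, sub_eq_zero] at h3
        exact (congrArg id h3).symm
      -- full m'-periodicity
      have hall : ∀ i, 1 ≤ i → (v : Eseq) (i + m') = (v : Eseq) i := by
        intro i
        induction i using Nat.strong_induction_on with
        | _ i ih =>
          intro h1
          by_cases hle : i ≤ k + m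
          · exact hv i h1 hle
          · have hi : k + m + 1 ≤ i := by omega
            have e1 : i + m' = (i - m + m') + m := by omega
            have e2 : (v : Eseq) ((i - m + m') + m) = (v : Eseq) (i - m + m') :=
              hper _ (by omega)
            have e3 : (v : Eseq) (i - m + m') = (v : Eseq) (i - m) :=
              ih (i - m) (by omega) (by omega)
            have e4 : (v : Eseq) (i - m + m) = (v : Eseq) (i - m) := hper _ (by omega)
            have e5 : i - m + m = i := by omega
            rw [e1, e2, e3, ← e4, e5]
      -- values at positive multiples of m' agree with the value at m'
      have hmul : ∀ j, 1 ≤ j → (v : Eseq) (j * m') = (v : Eseq) m' := by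
        intro j hj
        induction j with
        | zero => omega
        | succ j ih =>
          rcases Nat.eq_or_lt_of_le hj with h | h
          · rw [← h]; simp
          · have hj1 : 1 ≤ j := by omega
            have : (j + 1) * m' = j * m' + m' := by ring
            rw [this, hall (j * m') (Nat.mul_pos (by omega) (by omega)), ih hj1]
      -- v m' = 0
      obtain ⟨a, ha⟩ := hk
      obtain ⟨b, hb⟩ := hmm
      have hb1 : 1 ≤ b := by
        rcases Nat.eq_zero_or_pos b with h | h
        · subst h; simp at hb; omega
        · exact h
      have hkm : (v : Eseq) (k + m) = (v : Eseq) m' := by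
        have e : k + m = (a + b) * m' := by rw [ha, hb]; ring
        rw [congrArg (fun n => (v : Eseq) n) e]
        exact hmul (a + b) (by omega)
      have hm'0 : (v : Eseq) m' = 0 := by
        rcases Nat.eq_zero_or_pos a with h | h
        · have hvk : (v : Eseq) k = 0 := by
            have e : k = 0 := by rw [ha, h, Nat.mul_zero]
            rw [congrArg (fun n => (v : Eseq) n) e]; exact hv0
          rw [hkm, hvk] at hH
          have h2 : β * (v : Eseq) m' = 0 := by linear_combination hH
          exact (mul_eq_zero.mp h2).resolve_left hβ0
        · have hkv : (v : Eseq) k = (v : Eseq) m' := by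
            have e : k = a * m' := by rw [ha, Nat.mul_comm]
            rw [congrArg (fun n => (v : Eseq) n) e]; exact hmul a h
          rw [hkm, hkv] at hH
          have h2 : (β - 1) * (v : Eseq) m' = 0 := by linear_combination hH
          exact (mul_eq_zero.mp h2).resolve_left (sub_ne_zero.mpr hβ1)
      refine ⟨⟨hv0, ?_⟩, hv0, ?_⟩
      · intro i hi
        exact hall i hi
      · show β * (v : Eseq) (0 + m') - (v : Eseq) 0 = 0
        rw [Nat.zero_add, hm'0, hv0]
        ring
    · rintro ⟨⟨hv0', hper'⟩, -⟩ φ hφ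
      induction hφ using Submodule.span_induction with
      | mem φ hφ =>
        obtain ⟨i, ⟨hi1, _⟩, rfl⟩ := hφ
        rw [LinearMap.sub_apply, sub_eq_zero]
        exact (hper' i hi1).symm
      | zero => simp
      | add φ ψ _ _ hφ hψ => simp [hφ, hψ]
      | smul c φ _ hφ => simp [hφ]
  rw [← key, Subspace.dualCoannihilator_dualAnnihilator_eq]
end
end

section
/- Let (k,m) ∈ ℕ × ℕ* and let z ∈ ℳ_{k,m} be a fixed point of F_{k,m} whose sequence is preperiodic of exact type (0,m') with (0,m') ≺ (k,m). Then the restriction of the transpose (D_z F_{k,m})^* to the annihilator ℳ_{0,m'}^0 is nilpotent; equivalently, its spectrum is {0}. Moreover, with α_i = ω_i − ω_{i+m'} and δ_i = d·z_i^{d−1}, one has (D_z F_{k,m})^* α_1 = 0 and (D_z F_{k,m})^* α_i = δ_{i−1}·α_{i−1} for all i ≥ 2. -/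
noncomputable section

/-- Derivative coefficient of the `j`-th coordinate of `Q` at `z` in direction `v`. -/
def dqAux (d : ℕ) (z v : Eseq) (j : ℕ) : ℂ :=
  if 2 ≤ j then (d : ℂ) * z (j - 1) ^ (d - 1) * v (j - 1) else 0

/-- Derivative of `κ ∘ Q` at `z` in direction `v`. -/
def kdqAux (β : ℂ) (d k m : ℕ) (z v : Eseq) : ℂ :=
  if k = 0 then dqAux d z v m else (β * dqAux d z v (k + m) - dqAux d z v k) / (β - 1)

lemma qmap_hasDerivAt (d : ℕ) (z v : Eseq) (j : ℕ) :
    HasDerivAt (fun t : ℂ => Qmap d (z + t • v) j) (dqAux d z v j) 0 := by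
  by_cases h : 2 ≤ j
  · have hfun : (fun t : ℂ => Qmap d (z + t • v) j)
        = fun t : ℂ => (z (j - 1) + t * v (j - 1)) ^ d := by
      funext t
      simp [Qmap, if_pos h]
    rw [hfun, dqAux, if_pos h]
    have h1 : HasDerivAt (fun t : ℂ => z (j - 1) + t * v (j - 1)) (v (j - 1)) 0 := by
      simpa using ((hasDerivAt_id (0 : ℂ)).mul_const (v (j - 1))).const_add (z (j - 1))
    simpa using h1.fun_pow d
  · have hfun : (fun t : ℂ => Qmap d (z + t • v) j) = fun _ => (0 : ℂ) := by
      funext t; simp [Qmap, if_neg h]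
    rw [hfun, dqAux, if_neg h]
    exact hasDerivAt_const 0 0

lemma kappa_hasDerivAt (β : ℂ) (d k m : ℕ) (z v : Eseq) :
    HasDerivAt (fun t : ℂ => kappa β k m (Qmap d (z + t • v))) (kdqAux β d k m z v) 0 := by
  by_cases hk : k = 0
  · have hfun : (fun t : ℂ => kappa β k m (Qmap d (z + t • v)))
        = fun t : ℂ => Qmap d (z + t • v) m := by
      funext t; simp [kappa, hk]
    rw [hfun, kdqAux, if_pos hk]
    exact qmap_hasDerivAt d z v m
  · have hfun : (fun t : ℂ => kappa β k m (Qmap d (z + t • v)))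
        = fun t : ℂ => (β * Qmap d (z + t • v) (k + m) - Qmap d (z + t • v) k) / (β - 1) := by
      funext t; simp [kappa, hk]
    rw [hfun, kdqAux, if_neg hk]
    exact (((qmap_hasDerivAt d z v (k + m)).const_mul β).sub (qmap_hasDerivAt d z v k)).div_const _

lemma fmap_hasDerivAt (β : ℂ) (d k m : ℕ) (z v : Eseq) (i : ℕ) (hi : 1 ≤ i) :
    HasDerivAt (fun t : ℂ => Fmap β d k m (z + t • v) i)
      (dqAux d z v i - kdqAux β d k m z v) 0 := by
  have hfun : (fun t : ℂ => Fmap β d k m (z + t • v) i)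
      = fun t : ℂ => Qmap d (z + t • v) i - kappa β k m (Qmap d (z + t • v)) := by
    funext t
    have hne : i ≠ 0 := by omega
    simp [Fmap, projH, hne]
  rw [hfun]
  exact (qmap_hasDerivAt d z v i).sub (kappa_hasDerivAt β d k m z v)

/-- at a fixed point of exact type `(0,m')` with `(0,m') ≺ (k,m)`, the
restriction of the transpose `(D_z F_{k,m})^*` to the annihilator `ℳ_{0,m'}^0` is nilpotent
(equivalently, its spectrum is `{0}`); moreover `L^* α_1 = 0` and
`L^* α_i = δ_{i-1} α_{i-1}` for `i ≥ 2`, where `α_i = ω_i − ω_{i+m'}`. -/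
theorem stmt18 (d : ℕ) (hd : 2 ≤ d) (β : ℂ) (hβd : β ^ d = 1) (hβ1 : β ≠ 1)
    (k m m' : ℕ) (hm : 1 ≤ m) (hm' : 1 ≤ m')
    (z : Eseq) (hz : z ∈ Mspace β k m) (hfix : Fmap β d k m z = z)
    (hper : ∀ i, 1 ≤ i → z (i + m') = z i)
    (hexact : ∀ a b : ℕ, 1 ≤ b → (∀ i, a + 1 ≤ i → z (i + b) = z i) → m' ≤ b)
    (hprec : m' ∣ m ∧ (0 = k ∨ m' ∣ k) ∧ ((0 : ℕ), m') ≠ (k, m))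
    (L : Mspace β k m →ₗ[ℂ] Mspace β k m) (hL : IsDerivAt β d k m z L) :
    (∃ n : ℕ, ∀ ω ∈ ((Mspace β 0 m').comap (Mspace β k m).subtype).dualAnnihilator,
      (L.dualMap ^ n) ω = 0) ∧
    (∀ μ : ℂ, (∃ ω ∈ ((Mspace β 0 m').comap (Mspace β k m).subtype).dualAnnihilator,
      ω ≠ 0 ∧ L.dualMap ω = μ • ω) → μ = 0) ∧
    L.dualMap (omegaForm β k m 1 - omegaForm β k m (1 + m')) = 0 ∧
    (∀ i, 2 ≤ i → L.dualMap (omegaForm β k m i - omegaForm β k m (i + m')) =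
      ((d : ℂ) * z (i - 1) ^ (d - 1)) •
        (omegaForm β k m (i - 1) - omegaForm β k m (i - 1 + m'))) := by
  have hd0 : d ≠ 0 := by omega
  have hd1 : d - 1 ≠ 0 := by omega
  -- explicit formula for `L`
  have hLv : ∀ (v : Mspace β k m) (i : ℕ), 1 ≤ i →
      (L v : Eseq) i = dqAux d z (v : Eseq) i - kdqAux β d k m z (v : Eseq) := by
    intro v i hi
    rw [hL v i, (fmap_hasDerivAt β d k m z (v : Eseq) i hi).deriv]
  -- `z m' = 0`
  have hzm : z m' = 0 := by
    have h1 : Fmap β d k m z 1 = z 1 := by rw [hfix]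
    have h2 : Fmap β d k m z (1 + m') = z (1 + m') := by rw [hfix]
    have e2 : Qmap d z (1 + m') = z m' ^ d := by
      have hle : 2 ≤ 1 + m' := by omega
      simp [Qmap, hle]
    have e1 : Qmap d z 1 = 0 := by simp [Qmap]
    rw [hper 1 le_rfl] at h2
    simp only [Fmap, projH] at h1 h2
    rw [if_neg (by omega : (1 : ℕ) ≠ 0), e1] at h1
    rw [if_neg (by omega : 1 + m' ≠ 0), e2] at h2
    have hpow : z m' ^ d = 0 := by linear_combination h2 - h1
    exact (pow_eq_zero_iff hd0).mp hpow
    -- δ vanishes at m'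
  have part3 : L.dualMap (omegaForm β k m 1 - omegaForm β k m (1 + m')) = 0 := by
    apply LinearMap.ext
    intro v
    rw [LinearMap.dualMap_apply]
    simp only [LinearMap.sub_apply, LinearMap.zero_apply]
    have h1 := hLv v 1 le_rfl
    have h2 := hLv v (1 + m') (by omega)
    have e1 : dqAux d z (v : Eseq) 1 = 0 := by simp [dqAux]
    have e2 : dqAux d z (v : Eseq) (1 + m') = 0 := by
      rw [dqAux, if_pos (by omega : 2 ≤ 1 + m'), show 1 + m' - 1 = m' from by omega, hzm,
        zero_pow hd1]
      ring
    show (L v : Eseq) 1 - (L v : Eseq) (1 + m') = 0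
    rw [h1, h2, e1, e2]
    ring
  have part4 : ∀ i, 2 ≤ i → L.dualMap (omegaForm β k m i - omegaForm β k m (i + m')) =
      ((d : ℂ) * z (i - 1) ^ (d - 1)) •
        (omegaForm β k m (i - 1) - omegaForm β k m (i - 1 + m')) := by
    intro i hi
    apply LinearMap.ext
    intro v
    rw [LinearMap.dualMap_apply]
    simp only [LinearMap.sub_apply, LinearMap.smul_apply, smul_eq_mul]
    have h1 := hLv v i (by omega)
    have h2 := hLv v (i + m') (by omega)
    have e1 : dqAux d z (v : Eseq) i = (d : ℂ) * z (i - 1) ^ (d - 1) * (v : Eseq) (i - 1) := by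
      rw [dqAux, if_pos hi]
    have e2 : dqAux d z (v : Eseq) (i + m')
        = (d : ℂ) * z (i - 1) ^ (d - 1) * (v : Eseq) (i - 1 + m') := by
      rw [dqAux, if_pos (by omega : 2 ≤ i + m'), show i + m' - 1 = (i - 1) + m' from by omega,
        hper (i - 1) (by omega)]
    show (L v : Eseq) i - (L v : Eseq) (i + m')
        = (d : ℂ) * z (i - 1) ^ (d - 1) * ((v : Eseq) (i - 1) - (v : Eseq) (i - 1 + m'))
    rw [h1, h2, e1, e2]
    ring
  -- nilpotency on the generators
  have hnil : ∀ i : ℕ, 1 ≤ i →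
      (L.dualMap ^ i) (omegaForm β k m i - omegaForm β k m (i + m')) = 0 := by
    intro i
    induction i with
    | zero => intro h; exact absurd h (by omega)
    | succ n ih =>
      intro _
      by_cases hn : n = 0
      · subst hn
        simpa [pow_one] using part3
      · rw [pow_succ, Module.End.mul_apply, part4 (n + 1) (by omega),
          show n + 1 - 1 = n from by omega, map_smul, ih (by omega), smul_zero]
  have hnilN : ∀ i, 1 ≤ i → i ≤ k + m →
      (L.dualMap ^ (k + m)) (omegaForm β k m i - omegaForm β k m (i + m')) = 0 := by
    intro i h1 h2
    rw [show k + m = (k + m - i) + i from by omega, pow_add, Module.End.mul_apply, hnil i h1,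
      map_zero]
  -- the annihilator is the span of the α's
  set W := (Mspace β 0 m').comap (Mspace β k m).subtype with hWdef
  set S : Set (Module.Dual ℂ (Mspace β k m)) :=
    (fun i => omegaForm β k m i - omegaForm β k m (i + m')) '' (Set.Icc 1 (k + m)) with hSdef
  have hW : W = (Submodule.span ℂ S).dualCoannihilator := by
    apply le_antisymm
    · intro x hx
      rw [Submodule.mem_dualCoannihilator]
      rw [hWdef, Submodule.mem_comap] at hx
      have hx' : (x : Eseq) ∈ Mspace β 0 m' := hx
      have hxp : ∀ i, 1 ≤ i → (x : Eseq) (i + m') = (x : Eseq) i := by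
        intro i hi
        exact (Submodule.mem_inf.mp hx').1.2 i (by omega)
      intro φ hφ
      refine Submodule.span_induction ?_ ?_ ?_ ?_ hφ
      · rintro ψ ⟨i, hi, rfl⟩
        simp only [LinearMap.sub_apply]
        show (x : Eseq) i - (x : Eseq) (i + m') = 0
        rw [hxp i hi.1, sub_self]
      · rfl
      · intro a b _ _ ha hb; rw [LinearMap.add_apply, ha, hb, add_zero]
      · intro c a _ ha; rw [LinearMap.smul_apply, ha, smul_zero]
    · intro x hx
      rw [Submodule.mem_dualCoannihilator] at hx
      have hα : ∀ i, 1 ≤ i → i ≤ k + m → (x : Eseq) i = (x : Eseq) (i + m') := by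
        intro i h1 h2
        have h := hx _ (Submodule.subset_span (by exact ⟨i, ⟨h1, h2⟩, rfl⟩))
        have h' : (x : Eseq) i - (x : Eseq) (i + m') = 0 := h
        exact sub_eq_zero.mp h'
      obtain ⟨hxP, hxH⟩ := Submodule.mem_inf.mp x.2
      have hx0 : (x : Eseq) 0 = 0 := hxP.1
      have hxper : ∀ i, k + 1 ≤ i → (x : Eseq) (i + m) = (x : Eseq) i := hxP.2
      have hall : ∀ i, 1 ≤ i → (x : Eseq) (i + m') = (x : Eseq) i := by
        intro i
        induction i using Nat.strong_induction_on with
        | _ i ih =>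
          intro hi1
          by_cases hik : i ≤ k + m
          · exact (hα i hi1 hik).symm
          · have e1 : (x : Eseq) ((i - m) + m) = (x : Eseq) (i - m) := hxper (i - m) (by omega)
            have e2 : (x : Eseq) ((i - m + m') + m) = (x : Eseq) (i - m + m') :=
              hxper (i - m + m') (by omega)
            have e3 := ih (i - m) (by omega) (by omega)
            rw [show (i - m) + m = i from by omega] at e1
            rw [show (i - m + m') + m = i + m' from by omega] at e2
            rw [e2, e3]
            exact e1.symm
      have hrep : ∀ (t j : ℕ), 1 ≤ j → (x : Eseq) (j + t * m') = (x : Eseq) j := by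
        intro t
        induction t with
        | zero => intro j _; simp
        | succ n ih =>
          intro j hj
          rw [show j + (n + 1) * m' = (j + n * m') + m' from by ring,
            hall (j + n * m') (by omega), ih j hj]
      obtain ⟨u, hu⟩ := hprec.1
      have hu0 : u ≠ 0 := by rintro rfl; omega
      obtain ⟨u', rfl⟩ : ∃ u', u = u' + 1 := ⟨u - 1, by omega⟩
      have hm_eq : m = m' + u' * m' := by rw [hu]; ring
      have hxm' : (x : Eseq) m' = 0 := by
        by_cases hk : k = 0
        · subst hk
          have hH := hxH.2
          rw [Nat.zero_add] at hH
          have hβ0 : β ≠ 0 := by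
            intro h; rw [h, zero_pow hd0] at hβd; exact zero_ne_one hβd
          have hxm : (x : Eseq) m = 0 := by
            have hmul : β * (x : Eseq) m = 0 := by linear_combination hH + hx0
            exact (mul_eq_zero.mp hmul).resolve_left hβ0
          have hrw := hrep u' m' hm'
          rw [← hm_eq] at hrw
          rw [← hrw]
          exact hxm
        · have hdk : m' ∣ k := hprec.2.1.resolve_left (by omega)
          obtain ⟨s, hs⟩ := hdk
          have hs0 : s ≠ 0 := by rintro rfl; omega
          obtain ⟨s', rfl⟩ : ∃ s', s = s' + 1 := ⟨s - 1, by omega⟩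
          have hk_eq : k = m' + s' * m' := by rw [hs]; ring
          have hH := hxH.2
          have hkm : (x : Eseq) (k + m) = (x : Eseq) k := by
            have := hrep (u' + 1) k (by omega)
            rw [show k + (u' + 1) * m' = k + m from by rw [hu]; ring] at this
            exact this
          have hxk : (x : Eseq) k = 0 := by
            have hfac : (β - 1) * (x : Eseq) k = 0 := by
              rw [hkm] at hH; linear_combination hH
            exact (mul_eq_zero.mp hfac).resolve_left (sub_ne_zero_of_ne hβ1)
          have hrw := hrep s' m' hm'
          rw [← hk_eq] at hrw
          rw [← hrw]
          exact hxk
      rw [hWdef, Submodule.mem_comap]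
      refine Submodule.mem_inf.mpr ⟨⟨hx0, fun i hi => hall i (by omega)⟩, hx0, ?_⟩
      show β * (x : Eseq) (0 + m') - (x : Eseq) 0 = 0
      rw [zero_add, hxm', hx0, mul_zero, sub_zero]
  have hfinΦ : FiniteDimensional ℂ (Submodule.span ℂ S) := by
    apply FiniteDimensional.span_of_finite
    exact (Set.finite_Icc 1 (k + m)).image _
  have hWΦ : W.dualAnnihilator = Submodule.span ℂ S := by
    rw [hW]
    exact Subspace.dualCoannihilator_dualAnnihilator_eq
  have part1 : ∀ ω ∈ W.dualAnnihilator, (L.dualMap ^ (k + m)) ω = 0 := by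
    intro ω hω
    rw [hWΦ] at hω
    refine Submodule.span_induction ?_ ?_ ?_ ?_ hω
    · rintro ψ ⟨i, hi, rfl⟩
      exact hnilN i hi.1 hi.2
    · exact map_zero _
    · intro a b _ _ ha hb; rw [map_add, ha, hb, add_zero]
    · intro c a _ ha; rw [map_smul, ha, smul_zero]
  refine ⟨⟨k + m, part1⟩, ?_, part3, part4⟩
  rintro μ ⟨ω, hω, hne, heig⟩
  have hp : ∀ n : ℕ, (L.dualMap ^ n) ω = μ ^ n • ω := by
    intro n
    induction n with
    | zero => simp
    | succ n ih =>
      rw [pow_succ, Module.End.mul_apply, heig, map_smul, ih, smul_smul, ← pow_succ']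
  have h0 : μ ^ (k + m) • ω = 0 := by rw [← hp, part1 ω hω]
  have hpow0 : μ ^ (k + m) = 0 := by
    rcases smul_eq_zero.mp h0 with h | h
    · exact h
    · exact absurd h hne
  exact (pow_eq_zero_iff (by omega : k + m ≠ 0)).mp hpow0
end
end

section
/- Let (k,m) ∈ ℕ × ℕ* with k ≥ 1, and let z ∈ ℳ_{k,m} be a fixed point of F_{k,m} whose sequence is preperiodic of exact type (k,m') with m' a proper divisor of m (so (k,m') ≺ (k,m)). Let λ be the multiplier of P(t) = t^d + z_1 along the cycle of P^{∘k}(0), i.e. λ = ∏_{i=1}^{m'} P'(z_{k+i}). Then the spectrum of the restriction of the transpose (D_z F_{k,m})^* to the annihilator ℳ_{k,m'}^0 equals {μ ∈ ℂ : μ^m = λ^{m/m'} and μ^{m'} ≠ λ}; moreover this restriction is diagonalizable with simple eigenvalues. -/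
noncomputable section

/-! ### Auxiliary lemmas for stmt19 -/

section Stmt19Aux

lemma geom_helper {x : ℂ} {N : ℕ} (hN : x ^ N = 1) (hx : x ≠ 1) :
    ∑ i ∈ Finset.range N, x ^ i = 0 := by
  rw [geom_sum_eq hx, hN, sub_self, zero_div]

lemma geom2_helper {x y : ℂ} {N : ℕ} (h : x ^ N = y ^ N) (hxy : x ≠ y) :
    ∑ i ∈ Finset.range N, x ^ i * y ^ (N - 1 - i) = 0 := by
  have h2 := geom_sum₂_mul x y N
  rw [h, sub_self] at h2
  rcases mul_eq_zero.mp h2 with h3 | h3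
  · exact h3
  · exact absurd (sub_eq_zero.mp h3) hxy

lemma sum_Icc_split (g : ℕ → ℂ) (p q : ℕ) :
    ∑ j ∈ Finset.Icc 1 (p * q), g j
      = ∑ r ∈ Finset.Icc 1 p, ∑ s ∈ Finset.range q, g (r + s * p) := by
  induction q with
  | zero => simp
  | succ q ih =>
    have e1 : Finset.Icc 1 (p * q) = Finset.Ioc 0 (p * q) := by
      rw [← Finset.Icc_add_one_left_eq_Ioc, zero_add]
    have e2 : Finset.Icc 1 (p * (q + 1)) = Finset.Ioc 0 (p * (q + 1)) := by
      rw [← Finset.Icc_add_one_left_eq_Ioc, zero_add]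
    have h1 := Finset.sum_Ioc_consecutive g
      (show (0:ℕ) ≤ p * q by omega) (show p * q ≤ p * (q+1) by nlinarith [Nat.le_refl p])
    have h2 : ∑ j ∈ Finset.Ioc (p * q) (p * (q + 1)), g j
        = ∑ r ∈ Finset.Icc 1 p, g (r + q * p) := by
      have e3 : Finset.Ioc (p * q) (p * (q + 1)) = Finset.Ico (p * q + 1) (p * (q + 1) + 1) := by
        ext a; simp only [Finset.mem_Ioc, Finset.mem_Ico]; omega
      have e4 : Finset.Icc 1 p = Finset.Ico 1 (p + 1) := by
        ext a; simp only [Finset.mem_Icc, Finset.mem_Ico]; omega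
      rw [e3, e4, Finset.sum_Ico_eq_sum_range, Finset.sum_Ico_eq_sum_range]
      have : p * (q + 1) + 1 - (p * q + 1) = p := by ring_nf; omega
      rw [this]
      have : p + 1 - 1 = p := by omega
      rw [this]
      refine Finset.sum_congr rfl fun i _ => ?_
      congr 1
      ring
    calc ∑ j ∈ Finset.Icc 1 (p * (q + 1)), g j
        = ∑ j ∈ Finset.Icc 1 (p * q), g j + ∑ j ∈ Finset.Ioc (p * q) (p * (q + 1)), g j := by
          rw [e1, e2, h1]
      _ = ∑ r ∈ Finset.Icc 1 p, ∑ s ∈ Finset.range q, g (r + s * p)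
            + ∑ r ∈ Finset.Icc 1 p, g (r + q * p) := by rw [ih, h2]
      _ = ∑ r ∈ Finset.Icc 1 p, ∑ s ∈ Finset.range (q + 1), g (r + s * p) := by
          rw [← Finset.sum_add_distrib]
          refine Finset.sum_congr rfl fun r _ => ?_
          rw [Finset.sum_range_succ]

/-- Extension of coordinate data `y` (read off positions `1..k-1, k+1..k+m`) to an
element of `ℳ_{k,m}`. -/
def extSeq (β : ℂ) (k m : ℕ) (y : ℕ → ℂ) : Eseq := fun i =>
  if i = 0 then 0
  else if i < k then y i
  else if i = k then β * y (k + m)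
  else y (k + 1 + (i - (k + 1)) % m)

lemma mem_M_iff {β : ℂ} {k m : ℕ} {x : Eseq} : x ∈ Mspace β k m ↔
    (x 0 = 0 ∧ ∀ i, k + 1 ≤ i → x (i + m) = x i) ∧ (x 0 = 0 ∧ β * x (k + m) - x k = 0) :=
  Submodule.mem_inf

lemma extSeq_mem (β : ℂ) (k m : ℕ) (hk : 1 ≤ k) (hm : 1 ≤ m) (y : ℕ → ℂ) :
    extSeq β k m y ∈ Mspace β k m := by
  rw [mem_M_iff]
  refine ⟨⟨by simp [extSeq], fun i hi => ?_⟩, by simp [extSeq], ?_⟩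
  · have h1 : extSeq β k m y (i + m) = y (k + 1 + (i + m - (k + 1)) % m) := by
      simp only [extSeq]
      rw [if_neg (by omega), if_neg (by omega), if_neg (by omega)]
    have h2 : extSeq β k m y i = y (k + 1 + (i - (k + 1)) % m) := by
      simp only [extSeq]
      rw [if_neg (by omega), if_neg (by omega), if_neg (by omega)]
    rw [h1, h2]
    congr 2
    have : i + m - (k + 1) = (i - (k + 1)) + m := by omega
    rw [this, Nat.add_mod_right]
  · have h1 : extSeq β k m y (k + m) = y (k + m) := by
      simp only [extSeq]
      rw [if_neg (by omega), if_neg (by omega), if_neg (by omega)]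
      congr 1
      have : k + m - (k + 1) = m - 1 := by omega
      rw [this, Nat.mod_eq_of_lt (by omega)]
      omega
    have h2 : extSeq β k m y k = β * y (k + m) := by
      simp only [extSeq]
      rw [if_neg (by omega), if_neg (by omega)]
      simp
    rw [h1, h2, sub_self]

lemma tail_per {k m : ℕ} {x : Eseq} (hx : ∀ i, k + 1 ≤ i → x (i + m) = x i) :
    ∀ j s, x (k + 1 + j + s * m) = x (k + 1 + j) := by
  intro j s
  induction s with
  | zero => simp
  | succ s ih =>
    have e : k + 1 + j + (s + 1) * m = (k + 1 + j + s * m) + m := by ring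
    rw [e, hx (k + 1 + j + s * m) (by omega), ih]

lemma tail_mod {k m : ℕ} (hm : 1 ≤ m) {x : Eseq} (hx : ∀ i, k + 1 ≤ i → x (i + m) = x i)
    {i : ℕ} (hi : k + 1 ≤ i) : x i = x (k + 1 + (i - (k + 1)) % m) := by
  have e : i = k + 1 + ((i - (k + 1)) % m + (i - (k + 1)) / m * m) := by
    rw [Nat.mod_add_div']
    omega
  conv_lhs => rw [e, ← add_assoc]
  exact tail_per hx _ _

lemma M_ext {β : ℂ} {k m : ℕ} (hk : 1 ≤ k) (hm : 1 ≤ m) {x y : Eseq}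
    (hx : x ∈ Mspace β k m) (hy : y ∈ Mspace β k m)
    (h : ∀ p, 1 ≤ p → p ≤ k + m → p ≠ k → x p = y p) : x = y := by
  obtain ⟨⟨hx0, hxP⟩, _, hxH⟩ := mem_M_iff.mp hx
  obtain ⟨⟨hy0, hyP⟩, _, hyH⟩ := mem_M_iff.mp hy
  have hkm : x (k + m) = y (k + m) := h (k + m) (by omega) le_rfl (by omega)
  funext i
  by_cases h0 : i = 0
  · rw [h0, hx0, hy0]
  by_cases hik : i < k
  · exact h i (by omega) (by omega) (by omega)
  by_cases hk2 : i = k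
  · subst hk2
    have h1 : x i = β * x (i + m) := by linear_combination -hxH
    have h2 : y i = β * y (i + m) := by linear_combination -hyH
    rw [h1, h2, hkm]
  · have hi : k + 1 ≤ i := by omega
    rw [tail_mod hm hxP hi, tail_mod hm hyP hi]
    have hlt : (i - (k + 1)) % m < m := Nat.mod_lt _ (by omega)
    exact h _ (by omega) (by omega) (by omega)

end Stmt19Aux


section Stmt19Aux2


lemma sum_shift (F : ℕ → ℂ) (M : ℕ) :
    ∑ j ∈ Finset.Icc 2 M, F j = ∑ j ∈ Finset.Icc 1 (M - 1), F (j + 1) := by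
  rw [← Finset.Ico_add_one_right_eq_Icc, ← Finset.Ico_add_one_right_eq_Icc, Finset.sum_Ico_eq_sum_range,
    Finset.sum_Ico_eq_sum_range]
  rw [show M + 1 - 2 = M - 1 + 1 - 1 by omega]
  exact Finset.sum_congr rfl fun i _ => by congr 1; omega

/-- The linear functional `x ↦ ∑_{j=1}^m b_j x_{k+j}` on `ℳ_{k,m}`. -/
def coordSum (β : ℂ) (k m : ℕ) (b : ℕ → ℂ) : Module.Dual ℂ (Mspace β k m) where
  toFun x := ∑ j ∈ Finset.Icc 1 m, b j * (x : Eseq) (k + j)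
  map_add' x y := by
    simp only [Submodule.coe_add, Pi.add_apply]
    rw [← Finset.sum_add_distrib]
    exact Finset.sum_congr rfl fun j _ => by ring
  map_smul' c x := by
    simp only [Submodule.coe_smul, Pi.smul_apply, smul_eq_mul, RingHom.id_apply]
    rw [Finset.mul_sum]
    exact Finset.sum_congr rfl fun j _ => by ring

@[simp] lemma coordSum_apply (β : ℂ) (k m : ℕ) (b : ℕ → ℂ) (x : Mspace β k m) :
    coordSum β k m b x = ∑ j ∈ Finset.Icc 1 m, b j * (x : Eseq) (k + j) := rfl

lemma hasDerivAt_pow_affine (d : ℕ) (a b : ℂ) :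
    HasDerivAt (fun t : ℂ => (a + t * b) ^ d) ((d : ℂ) * a ^ (d - 1) * b) 0 := by
  have h1 : HasDerivAt (fun t : ℂ => a + t * b) b 0 := by
    simpa using ((hasDerivAt_id (0 : ℂ)).mul_const b).const_add a
  simpa using h1.fun_pow d

lemma extSeq_delta_coord (β : ℂ) (k m : ℕ) (j p : ℕ)
    (hp1 : 1 ≤ p) (hp2 : p ≤ k + m) (hpk : p ≠ k) :
    extSeq β k m (fun i => if i = j then (1:ℂ) else 0) p = if p = j then (1:ℂ) else 0 := by
  simp only [extSeq]
  rw [if_neg (by omega)]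
  by_cases h : p < k
  · rw [if_pos h]
  · rw [if_neg h, if_neg hpk]
    have e : k + 1 + (p - (k + 1)) % m = p := by
      have h2 : p - (k + 1) < m := by omega
      rw [Nat.mod_eq_of_lt h2]; omega
    rw [e]

lemma Msub {β : ℂ} {k m' m n : ℕ} (hm' : 1 ≤ m') (hn : 1 ≤ n) (hmn : m = m' * n) :
    Mspace β k m' ≤ Mspace β k m := by
  subst hmn
  intro x hx
  obtain ⟨⟨hx0, hxP⟩, _, hxH⟩ := mem_M_iff.mp hx
  rw [mem_M_iff]
  refine ⟨⟨hx0, fun i hi => ?_⟩, hx0, ?_⟩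
  · have h := tail_per hxP (i - (k + 1)) n
    have e1 : k + 1 + (i - (k + 1)) = i := by omega
    rw [e1] at h
    rw [show i + m' * n = i + n * m' by ring]
    exact h
  · obtain ⟨n₁, rfl⟩ : ∃ n₁, n = n₁ + 1 := ⟨n - 1, by omega⟩
    have h2 := tail_per hxP (m' - 1) n₁
    rw [show k + 1 + (m' - 1) = k + m' by omega] at h2
    rw [show k + m' * (n₁ + 1) = k + m' + n₁ * m' by ring, h2]
    exact hxH

lemma deriv_F (β : ℂ) (d k m : ℕ) (hd : 2 ≤ d) (hk : 1 ≤ k) (hm : 1 ≤ m)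
    (z v : Eseq) (hz0 : z 0 = 0) (hv0 : v 0 = 0) (i : ℕ) (hi : 2 ≤ i) :
    deriv (fun t : ℂ => Fmap β d k m (z + t • v) i) 0
      = (d : ℂ) * z (i - 1) ^ (d - 1) * v (i - 1)
        - (β * ((d : ℂ) * z (k + m - 1) ^ (d - 1) * v (k + m - 1))
            - (d : ℂ) * z (k - 1) ^ (d - 1) * v (k - 1)) / (β - 1) := by
  have hfun : (fun t : ℂ => Fmap β d k m (z + t • v) i)
      = fun t : ℂ => (z (i - 1) + t * v (i - 1)) ^ d
          - (β * (z (k + m - 1) + t * v (k + m - 1)) ^ d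
              - (z (k - 1) + t * v (k - 1)) ^ d) / (β - 1) := by
    funext t
    simp only [Fmap, projH, Qmap, kappa, Pi.add_apply, Pi.smul_apply, smul_eq_mul]
    rw [if_neg (by omega : ¬ i = 0), if_neg (by omega : ¬ k = 0), if_pos hi,
      if_pos (by omega : 2 ≤ k + m)]
    by_cases h2k : 2 ≤ k
    · rw [if_pos h2k]
    · rw [if_neg h2k]
      have e0 : (z (k - 1) + t * v (k - 1)) ^ d = 0 := by
        rw [show k - 1 = 0 by omega, hz0, hv0, mul_zero, add_zero]
        exact zero_pow (by omega)
      rw [e0]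
  rw [hfun]
  have h1 := hasDerivAt_pow_affine d (z (i - 1)) (v (i - 1))
  have h2 := hasDerivAt_pow_affine d (z (k + m - 1)) (v (k + m - 1))
  have h3 := hasDerivAt_pow_affine d (z (k - 1)) (v (k - 1))
  exact (h1.sub (((h2.const_mul β).sub h3).div_const (β - 1))).deriv

end Stmt19Aux2

/-- at a fixed point of exact type `(k,m')` with `k ≥ 1` and `m'` a proper
divisor of `m`, the spectrum of the restriction of the transpose `(D_z F_{k,m})^*` to the
annihilator `ℳ_{k,m'}^0` equals `{μ : μ^m = λ^{m/m'} and μ^{m'} ≠ λ}`, where `λ` is the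
multiplier of `P(t) = t^d + z_1` along the cycle of `P^{∘k}(0)`; moreover this restriction
is diagonalizable with simple eigenvalues. -/
theorem stmt19 (d : ℕ) (hd : 2 ≤ d) (β : ℂ) (hβd : β ^ d = 1) (hβ1 : β ≠ 1)
    (k m m' : ℕ) (hk : 1 ≤ k) (hm : 1 ≤ m) (hm' : 1 ≤ m')
    (hdvd : m' ∣ m) (hne : m' ≠ m)
    (z : Eseq) (hz : z ∈ Mspace β k m) (hfix : Fmap β d k m z = z)
    (hper : ∀ i, k + 1 ≤ i → z (i + m') = z i)
    (hexact : ∀ a b : ℕ, 1 ≤ b → (∀ i, a + 1 ≤ i → z (i + b) = z i) → k ≤ a ∧ m' ≤ b)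
    (lam : ℂ) (hlam : lam = ∏ i ∈ Finset.Icc 1 m', (d : ℂ) * z (k + i) ^ (d - 1))
    (L : Mspace β k m →ₗ[ℂ] Mspace β k m) (hL : IsDerivAt β d k m z L) :
    ({μ : ℂ | ∃ ω ∈ ((Mspace β k m').comap (Mspace β k m).subtype).dualAnnihilator,
        ω ≠ 0 ∧ L.dualMap ω = μ • ω} =
      {μ : ℂ | μ ^ m = lam ^ (m / m') ∧ μ ^ m' ≠ lam}) ∧
    (Submodule.span ℂ {ω : Module.Dual ℂ (Mspace β k m) |
        ω ∈ ((Mspace β k m').comap (Mspace β k m).subtype).dualAnnihilator ∧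
        ∃ μ : ℂ, L.dualMap ω = μ • ω} =
      ((Mspace β k m').comap (Mspace β k m).subtype).dualAnnihilator) ∧
    (∀ (μ : ℂ) (ω₁ ω₂ : Module.Dual ℂ (Mspace β k m)),
      ω₁ ∈ ((Mspace β k m').comap (Mspace β k m).subtype).dualAnnihilator →
      ω₂ ∈ ((Mspace β k m').comap (Mspace β k m).subtype).dualAnnihilator →
      L.dualMap ω₁ = μ • ω₁ → L.dualMap ω₂ = μ • ω₂ → ω₁ ≠ 0 →
      ∃ c : ℂ, ω₂ = c • ω₁) := by
  classical
  obtain ⟨n, hmn⟩ := hdvd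
  have hn2 : 2 ≤ n := by
    rcases n with _ | _ | n
    · omega
    · omega
    · omega
  have hm2 : 2 ≤ m := by
    have : m' * 2 ≤ m' * n := Nat.mul_le_mul_left m' hn2
    omega
  have hndiv : m / m' = n := by rw [hmn]; exact Nat.mul_div_cancel_left n (by omega)
  obtain ⟨⟨hz0, hzP⟩, _, hzH⟩ := mem_M_iff.mp hz
  have hβ0 : β - 1 ≠ 0 := sub_ne_zero.mpr hβ1
  have hd0 : (d : ℂ) ≠ 0 := Nat.cast_ne_zero.mpr (by omega)
  -- recursion for z
  have hQ1 : Qmap d z 1 = 0 := by simp [Qmap]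
  have hκ : kappa β k m (Qmap d z) = - z 1 := by
    have h1 := congrFun hfix 1
    simp only [Fmap, projH] at h1
    rw [if_neg one_ne_zero, hQ1] at h1
    linear_combination - h1
  have hzrec : ∀ i, 2 ≤ i → z i = z (i - 1) ^ d + z 1 := by
    intro i hi
    have h1 := congrFun hfix i
    simp only [Fmap, projH] at h1
    rw [if_neg (by omega : ¬ i = 0), hκ] at h1
    have hQ : Qmap d z i = z (i - 1) ^ d := by simp [Qmap, hi]
    rw [hQ] at h1
    linear_combination - h1
  -- nonvanishing of the cycle
  have znz : ∀ j, 1 ≤ j → z (k + j) ≠ 0 := by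
    intro j hj hzero
    have hper0 : ∀ i, 0 + 1 ≤ i → z (i + (k + j)) = z i := by
      intro i hi
      induction i, hi using Nat.le_induction with
      | base =>
        have h := hzrec (1 + (k + j)) (by omega)
        rw [show 1 + (k + j) - 1 = k + j by omega, hzero] at h
        rw [h, zero_pow (by omega), zero_add]
      | succ i hi ih =>
        have h1 := hzrec (i + 1 + (k + j)) (by omega)
        rw [show i + 1 + (k + j) - 1 = i + (k + j) by omega, ih] at h1
        rw [h1, hzrec (i + 1) (by omega), show i + 1 - 1 = i by omega]
    exact absurd ((hexact 0 (k + j) (by omega) hper0).1) (by omega)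
  -- weights
  set cc : ℕ → ℂ := fun i => (d : ℂ) * z i ^ (d - 1) with hcc
  set W : ℕ → ℂ := fun j => ∏ l ∈ Finset.Ico 1 j, cc (k + l) with hWdef
  have hccnz : ∀ j, 1 ≤ j → cc (k + j) ≠ 0 :=
    fun j hj => mul_ne_zero hd0 (pow_ne_zero _ (znz j hj))
  have hccper : ∀ j, 1 ≤ j → cc (k + (j + m')) = cc (k + j) := by
    intro j hj
    simp only [hcc]
    rw [show k + (j + m') = k + j + m' by ring, hper (k + j) (by omega)]
  have hzkm : z (k + m) = z (k + m') := by
    obtain ⟨n₁, hn₁⟩ : ∃ n₁, n = n₁ + 1 := ⟨n - 1, by omega⟩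
    have h := tail_per hper (m' - 1) n₁
    rw [show k + 1 + (m' - 1) = k + m' by omega] at h
    rw [show k + m = k + m' + n₁ * m' by rw [hmn, hn₁]; ring, h]
  have hzk : z k = β * z (k + m') := by
    rw [← hzkm]
    linear_combination - hzH
  have hβpow : β * β ^ (d - 1) = 1 := by
    have h : β ^ (d - 1) * β = β ^ d := by
      rw [← pow_succ]; congr 1; omega
    rw [mul_comm, h, hβd]
  have hβcc : β * cc k = cc (k + m') := by
    simp only [hcc]
    rw [hzk, mul_pow]
    linear_combination ((d : ℂ) * z (k + m') ^ (d - 1)) * hβpow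
  have hccm : cc (k + m) = cc (k + m') := by simp only [hcc]; rw [hzkm]
  have hW1 : W 1 = 1 := by simp [hWdef]
  have hWstep : ∀ j, 1 ≤ j → W (j + 1) = W j * cc (k + j) :=
    fun j hj => Finset.prod_Ico_succ_top hj _
  have hWnz : ∀ j, W j ≠ 0 := by
    intro j
    simp only [hWdef]
    exact Finset.prod_ne_zero_iff.mpr fun l hl => hccnz l (Finset.mem_Ico.mp hl).1
  have hlamW : lam = W (m' + 1) := by
    rw [hlam]
    simp only [hWdef, hcc]
    rw [← Finset.Ico_add_one_right_eq_Icc]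
  have hlamnz : lam ≠ 0 := hlamW ▸ hWnz (m' + 1)
  have hWshift : ∀ j, 1 ≤ j → W (j + m') = W j * lam := by
    intro j hj
    induction j, hj using Nat.le_induction with
    | base => rw [hW1, one_mul, hlamW, add_comm]
    | succ j hj ih =>
      rw [show j + 1 + m' = j + m' + 1 by ring, hWstep (j + m') (by omega), ih,
        show k + (j + m') = k + (j + m') by rfl]
      rw [show cc (k + (j + m')) = cc (k + j) from hccper j hj, hWstep j hj]
      ring
  have hWpow : ∀ s, W (1 + s * m') = lam ^ s := by
    intro s
    induction s with
    | zero => simpa using hW1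
    | succ s ih =>
      rw [show 1 + (s + 1) * m' = 1 + s * m' + m' by ring, hWshift (1 + s * m') (by omega), ih,
        pow_succ]
  have hWshiftpow : ∀ r, 1 ≤ r → ∀ s, W (r + s * m') = W r * lam ^ s := by
    intro r hr s
    induction s with
    | zero => simp
    | succ s ih =>
      rw [show r + (s + 1) * m' = r + s * m' + m' by ring, hWshift (r + s * m') (by omega), ih,
        pow_succ]
      ring
  have hWm1 : W (m + 1) = lam ^ n := by
    rw [show m + 1 = 1 + n * m' by rw [hmn]; ring, hWpow n]

  -- basis vectors
  set e : ℕ → Eseq := fun j => extSeq β k m (fun i => if i = j then (1:ℂ) else 0) with he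
  have heM : ∀ j, e j ∈ Mspace β k m := fun j => extSeq_mem β k m hk hm _
  set ee : ℕ → Mspace β k m := fun j => ⟨e j, heM j⟩ with hee
  have hecoord : ∀ j p, 1 ≤ p → p ≤ k + m → p ≠ k → e j p = if p = j then (1:ℂ) else 0 :=
    fun j p h1 h2 h3 => extSeq_delta_coord β k m j p h1 h2 h3
  have heM' : ∀ i, 1 ≤ i → i < k → e i ∈ Mspace β k m' := by
    intro i hi1 hi2
    have hzero : ∀ p, k + 1 ≤ p → e i p = 0 := by
      intro p hp
      simp only [he, extSeq]
      rw [if_neg (by omega), if_neg (by omega), if_neg (by omega), if_neg (by omega)]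
    have hek : e i k = 0 := by
      simp only [he, extSeq]
      rw [if_neg (by omega), if_neg (by omega), if_pos trivial, if_neg (by omega), mul_zero]
    rw [mem_M_iff]
    have he0 : e i 0 = 0 := by simp [he, extSeq]
    refine ⟨⟨he0, fun p hp => ?_⟩, he0, ?_⟩
    · rw [hzero p hp, hzero (p + m') (by omega)]
    · rw [hzero (k + m') (by omega), hek, mul_zero, sub_zero]
  -- the m'-periodic basis vectors f and their decomposition
  set f : ℕ → Eseq := fun r => extSeq β k m' (fun i => if i = k + r then (1:ℂ) else 0) with hf
  have hfM' : ∀ r, f r ∈ Mspace β k m' := fun r => extSeq_mem β k m' hk hm' _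
  have hfM : ∀ r, f r ∈ Mspace β k m := fun r => Msub hm' (by omega) hmn (hfM' r)
  have hfdec : ∀ r, 1 ≤ r → r ≤ m' →
      f r = ∑ s ∈ Finset.range n, e (k + (r + s * m')) := by
    intro r hr1 hr2
    refine M_ext hk hm (hfM r) (Submodule.sum_mem _ fun s _ => heM _) ?_
    intro p hp1 hp2 hpk
    have hsum : (∑ s ∈ Finset.range n, e (k + (r + s * m'))) p
        = ∑ s ∈ Finset.range n, (if p = k + (r + s * m') then (1:ℂ) else 0) := by
      rw [Finset.sum_apply]
      exact Finset.sum_congr rfl fun s _ => hecoord _ p hp1 hp2 hpk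
    rw [hsum]
    by_cases hpk2 : p < k
    · have hL : f r p = 0 := by
        simp only [hf, extSeq]
        rw [if_neg (by omega), if_pos hpk2, if_neg (by omega)]
      rw [hL]
      exact (Finset.sum_eq_zero fun s _ => if_neg (by omega)).symm
    · have hp3 : k + 1 ≤ p := by omega
      have hL : f r p = if (p - (k + 1)) % m' = r - 1 then (1:ℂ) else 0 := by
        simp only [hf, extSeq]
        rw [if_neg (by omega), if_neg (by omega), if_neg (by omega)]
        have hmod : (p - (k + 1)) % m' < m' := Nat.mod_lt _ (by omega)
        by_cases hc : (p - (k + 1)) % m' = r - 1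
        · rw [if_pos (by omega), if_pos hc]
        · rw [if_neg (by omega), if_neg hc]
      rw [hL]
      have hmod : (p - (k + 1)) % m' < m' := Nat.mod_lt _ (by omega)
      by_cases hc : (p - (k + 1)) % m' = r - 1
      · rw [if_pos hc]
        set s₀ := (p - (k + 1)) / m' with hs₀
        have hps : p = k + (r + s₀ * m') := by
          have h := Nat.mod_add_div' (p - (k + 1)) m'
          rw [hc, ← hs₀] at h
          omega
        have hs₀n : s₀ < n := by
          have h3 : p - (k + 1) < m' * n := by omega
          by_contra hcon
          push_neg at hcon
          have h5 : n * m' ≤ s₀ * m' := Nat.mul_le_mul_right m' hcon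
          have h4 := Nat.mod_add_div' (p - (k + 1)) m'
          rw [← hs₀] at h4
          have hcomm : m' * n = n * m' := Nat.mul_comm m' n
          omega
        rw [Finset.sum_eq_single_of_mem s₀ (Finset.mem_range.mpr hs₀n)]
        · rw [if_pos hps]
        · intro s hs hne
          refine if_neg fun hps' => hne ?_
          have : s * m' = s₀ * m' := by omega
          exact Nat.eq_of_mul_eq_mul_right (by omega) this
      · rw [if_neg hc]
        refine (Finset.sum_eq_zero fun s hs => if_neg fun hps => hc ?_).symm
        have h2 : p - (k + 1) = (r - 1) + s * m' := by omega
        rw [h2, Nat.add_mul_mod_self_right, Nat.mod_eq_of_lt (by omega)]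
  -- decomposition of an arbitrary element over the basis
  have hdecomp : ∀ x : Mspace β k m, (x : Eseq)
      = ∑ i ∈ Finset.Icc 1 (k - 1), (x : Eseq) i • e i
        + ∑ j ∈ Finset.Icc 1 m, (x : Eseq) (k + j) • e (k + j) := by
    intro x
    have hmem : (∑ i ∈ Finset.Icc 1 (k - 1), (x : Eseq) i • e i
        + ∑ j ∈ Finset.Icc 1 m, (x : Eseq) (k + j) • e (k + j)) ∈ Mspace β k m :=
      Submodule.add_mem _
        (Submodule.sum_mem _ fun i _ => Submodule.smul_mem _ _ (heM i))
        (Submodule.sum_mem _ fun j _ => Submodule.smul_mem _ _ (heM _))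
    refine M_ext hk hm x.2 hmem ?_
    intro p hp1 hp2 hpk
    have hrw : (∑ i ∈ Finset.Icc 1 (k - 1), (x : Eseq) i • e i
        + ∑ j ∈ Finset.Icc 1 m, (x : Eseq) (k + j) • e (k + j)) p
        = (∑ i ∈ Finset.Icc 1 (k - 1), (x : Eseq) i * (if p = i then (1:ℂ) else 0))
          + ∑ j ∈ Finset.Icc 1 m, (x : Eseq) (k + j) * (if p = k + j then (1:ℂ) else 0) := by
      simp only [Pi.add_apply, Finset.sum_apply, Pi.smul_apply, smul_eq_mul]
      congr 1
      · exact Finset.sum_congr rfl fun i _ => by rw [hecoord i p hp1 hp2 hpk]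
      · exact Finset.sum_congr rfl fun j _ => by rw [hecoord (k + j) p hp1 hp2 hpk]
    rw [hrw]
    by_cases hpk2 : p < k
    · rw [Finset.sum_eq_single_of_mem p (Finset.mem_Icc.mpr ⟨hp1, by omega⟩)]
      · rw [if_pos rfl, mul_one,
          Finset.sum_eq_zero fun j _ => by rw [if_neg (by omega), mul_zero], add_zero]
      · intro i hi hne
        rw [if_neg fun h => hne h.symm, mul_zero]
    · rw [Finset.sum_eq_zero fun i hi => by
        rw [if_neg (by have := Finset.mem_Icc.mp hi; omega), mul_zero], zero_add]
      rw [Finset.sum_eq_single_of_mem (p - k) (Finset.mem_Icc.mpr ⟨by omega, by omega⟩)]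
      · rw [if_pos (by omega), mul_one, show k + (p - k) = p by omega]
      · intro j hj hne
        rw [if_neg (by have := Finset.mem_Icc.mp hj; omega), mul_zero]
  have hxdecomp : ∀ x : Mspace β k m,
      x = ∑ i ∈ Finset.Icc 1 (k - 1), (x : Eseq) i • ee i
        + ∑ j ∈ Finset.Icc 1 m, (x : Eseq) (k + j) • ee (k + j) := by
    intro x
    apply Subtype.ext
    have hco : ((∑ i ∈ Finset.Icc 1 (k - 1), (x : Eseq) i • ee i
        + ∑ j ∈ Finset.Icc 1 m, (x : Eseq) (k + j) • ee (k + j) : Mspace β k m) : Eseq)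
        = ∑ i ∈ Finset.Icc 1 (k - 1), (x : Eseq) i • e i
          + ∑ j ∈ Finset.Icc 1 m, (x : Eseq) (k + j) • e (k + j) := by
      push_cast
      rfl
    rw [hco]
    exact hdecomp x
  -- the annihilator, pointwise
  have hannmem : ∀ ω : Module.Dual ℂ (Mspace β k m),
      ω ∈ (Submodule.comap (Mspace β k m).subtype (Mspace β k m')).dualAnnihilator ↔
      ∀ x : Mspace β k m, (x : Eseq) ∈ Mspace β k m' → ω x = 0 := by
    intro ω
    rw [Submodule.mem_dualAnnihilator]
    constructor
    · intro h x hx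
      exact h x (by simpa [Submodule.mem_comap] using hx)
    · intro h x hx
      exact h x (by simpa [Submodule.mem_comap] using hx)
  -- representation of annihilator elements
  have hrepr : ∀ ω : Module.Dual ℂ (Mspace β k m),
      (∀ x : Mspace β k m, (x : Eseq) ∈ Mspace β k m' → ω x = 0) →
      ∀ x : Mspace β k m, ω x = ∑ j ∈ Finset.Icc 1 m, ω (ee (k + j)) * (x : Eseq) (k + j) := by
    intro ω hω x
    conv_lhs => rw [hxdecomp x]
    rw [map_add, map_sum, map_sum]
    have h1 : ∑ i ∈ Finset.Icc 1 (k - 1), ω ((x : Eseq) i • ee i) = 0 := by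
      refine Finset.sum_eq_zero fun i hi => ?_
      obtain ⟨hi1, hi2⟩ := Finset.mem_Icc.mp hi
      rw [map_smul, hω (ee i) (heM' i hi1 (by omega)), smul_zero]
    rw [h1, zero_add]
    exact Finset.sum_congr rfl fun j _ => by rw [map_smul, smul_eq_mul, mul_comm]
  -- residue relations for annihilator elements
  have hres : ∀ ω : Module.Dual ℂ (Mspace β k m),
      (∀ x : Mspace β k m, (x : Eseq) ∈ Mspace β k m' → ω x = 0) →
      ∀ r, 1 ≤ r → r ≤ m' → ∑ s ∈ Finset.range n, ω (ee (k + (r + s * m'))) = 0 := by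
    intro ω hω r hr1 hr2
    have hfr := hω ⟨f r, hfM r⟩ (hfM' r)
    have heq : (⟨f r, hfM r⟩ : Mspace β k m) = ∑ s ∈ Finset.range n, ee (k + (r + s * m')) := by
      apply Subtype.ext
      have hco : ((∑ s ∈ Finset.range n, ee (k + (r + s * m')) : Mspace β k m) : Eseq)
          = ∑ s ∈ Finset.range n, e (k + (r + s * m')) := by
        push_cast
        rfl
      rw [hco]
      exact hfdec r hr1 hr2
    calc ∑ s ∈ Finset.range n, ω (ee (k + (r + s * m')))
        = ω (∑ s ∈ Finset.range n, ee (k + (r + s * m'))) := (map_sum ω _ _).symm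
      _ = ω ⟨f r, hfM r⟩ := (congrArg ω heq).symm
      _ = 0 := hfr
  have hbsum : ∀ ω : Module.Dual ℂ (Mspace β k m),
      (∀ x : Mspace β k m, (x : Eseq) ∈ Mspace β k m' → ω x = 0) →
      ∑ j ∈ Finset.Icc 1 m, ω (ee (k + j)) = 0 := by
    intro ω hω
    have h := sum_Icc_split (fun j => ω (ee (k + j))) m' n
    rw [← hmn] at h
    rw [h]
    exact Finset.sum_eq_zero fun r hr =>
      hres ω hω r (Finset.mem_Icc.mp hr).1 (Finset.mem_Icc.mp hr).2

  -- coordinates of members and key formula for L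
  have hxk : ∀ x : Mspace β k m, (x : Eseq) k = β * (x : Eseq) (k + m) := by
    intro x
    have h := (mem_M_iff.mp x.2).2.2
    linear_combination - h
  have hx0 : ∀ x : Mspace β k m, (x : Eseq) 0 = 0 := fun x => (mem_M_iff.mp x.2).1.1
  have keyL : ∀ (x : Mspace β k m) (j : ℕ), 1 ≤ j →
      (L x : Eseq) (k + j) = cc (k + j - 1) * (x : Eseq) (k + j - 1)
        - (β * (cc (k + m - 1) * (x : Eseq) (k + m - 1))
            - cc (k - 1) * (x : Eseq) (k - 1)) / (β - 1) := by
    intro x j hj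
    rw [hL x (k + j), deriv_F β d k m hd hk hm z x hz0 (hx0 x) (k + j) (by omega)]
  have hωL : ∀ ω : Module.Dual ℂ (Mspace β k m),
      (∀ x : Mspace β k m, (x : Eseq) ∈ Mspace β k m' → ω x = 0) →
      ∀ x : Mspace β k m, ω (L x)
        = ∑ j ∈ Finset.Icc 1 (m - 1), (ω (ee (k + (j + 1))) * cc (k + j)) * (x : Eseq) (k + j)
          + (ω (ee (k + 1)) * cc (k + m')) * (x : Eseq) (k + m) := by
    intro ω hω x
    rw [hrepr ω hω (L x)]
    have h1 : ∀ j ∈ Finset.Icc 1 m, ω (ee (k + j)) * (L x : Eseq) (k + j)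
        = ω (ee (k + j)) * (cc (k + j - 1) * (x : Eseq) (k + j - 1))
          - ω (ee (k + j)) * ((β * (cc (k + m - 1) * (x : Eseq) (k + m - 1))
              - cc (k - 1) * (x : Eseq) (k - 1)) / (β - 1)) := by
      intro j hj
      rw [keyL x j (Finset.mem_Icc.mp hj).1]
      ring
    rw [Finset.sum_congr rfl h1, Finset.sum_sub_distrib, ← Finset.sum_mul, hbsum ω hω,
      zero_mul, sub_zero]
    have hsplit1 : Finset.Icc 1 m = insert 1 (Finset.Icc 2 m) := by
      ext a; simp only [Finset.mem_insert, Finset.mem_Icc]; omega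
    have h2 := sum_shift (fun j => ω (ee (k + j)) * (cc (k + j - 1) * (x : Eseq) (k + j - 1))) m
    rw [hsplit1, Finset.sum_insert (by simp), h2]
    have hterm1 : ω (ee (k + 1)) * (cc (k + 1 - 1) * (x : Eseq) (k + 1 - 1))
        = (ω (ee (k + 1)) * cc (k + m')) * (x : Eseq) (k + m) := by
      rw [show k + 1 - 1 = k by omega, hxk x]
      linear_combination (ω (ee (k + 1)) * (x : Eseq) (k + m)) * hβcc
    rw [hterm1]
    have hterms : ∀ j ∈ Finset.Icc 1 (m - 1),
        ω (ee (k + (j + 1))) * (cc (k + (j + 1) - 1) * (x : Eseq) (k + (j + 1) - 1))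
        = (ω (ee (k + (j + 1))) * cc (k + j)) * (x : Eseq) (k + j) := by
      intro j hj
      rw [show k + (j + 1) - 1 = k + j by omega]
      ring
    rw [Finset.sum_congr rfl hterms]
    ring
  -- evaluation of basis vectors
  have hval : ∀ j' j, 1 ≤ j → j ≤ m → (ee j' : Eseq) (k + j) = if k + j = j' then (1:ℂ) else 0 :=
    fun j' j hj1 hj2 => hecoord j' (k + j) (by omega) (by omega) (by omega)
  -- extraction of the recursion relations from the eigenvalue equation
  have hextract : ∀ (μ : ℂ) (ω : Module.Dual ℂ (Mspace β k m)),
      (∀ x : Mspace β k m, (x : Eseq) ∈ Mspace β k m' → ω x = 0) →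
      L.dualMap ω = μ • ω →
      (∀ j, 1 ≤ j → j ≤ m - 1 → ω (ee (k + (j + 1))) * cc (k + j) = μ * ω (ee (k + j)))
        ∧ ω (ee (k + 1)) * cc (k + m') = μ * ω (ee (k + m)) := by
    intro μ ω hω heig
    have happ : ∀ x : Mspace β k m, ω (L x) = μ * ω x := by
      intro x
      calc ω (L x) = (L.dualMap ω) x := rfl
        _ = (μ • ω) x := by rw [heig]
        _ = μ * ω x := rfl
    constructor
    · intro j₀ hj₀1 hj₀2
      have h := happ (ee (k + j₀))
      rw [hωL ω hω (ee (k + j₀))] at h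
      have hz1 : ∀ j ∈ Finset.Icc 1 (m - 1), j ≠ j₀ →
          (ω (ee (k + (j + 1))) * cc (k + j)) * (ee (k + j₀) : Eseq) (k + j) = 0 := by
        intro j hj hne
        obtain ⟨ha, hb⟩ := Finset.mem_Icc.mp hj
        rw [hval (k + j₀) j ha (by omega), if_neg (by omega), mul_zero]
      rw [Finset.sum_eq_single_of_mem j₀ (Finset.mem_Icc.mpr ⟨hj₀1, hj₀2⟩) hz1] at h
      rw [hval (k + j₀) j₀ hj₀1 (by omega), if_pos rfl, mul_one] at h
      rw [hval (k + j₀) m (by omega) le_rfl, if_neg (by omega), mul_zero, add_zero] at h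
      exact h
    · have h := happ (ee (k + m))
      rw [hωL ω hω (ee (k + m))] at h
      have hz1 : ∀ j ∈ Finset.Icc 1 (m - 1),
          (ω (ee (k + (j + 1))) * cc (k + j)) * (ee (k + m) : Eseq) (k + j) = 0 := by
        intro j hj
        obtain ⟨ha, hb⟩ := Finset.mem_Icc.mp hj
        rw [hval (k + m) j ha (by omega), if_neg (by omega), mul_zero]
      rw [Finset.sum_eq_zero hz1, zero_add] at h
      rw [hval (k + m) m (by omega) le_rfl, if_pos rfl, mul_one] at h
      exact h

  -- iterated recursion
  have hWbgen : ∀ (μ : ℂ) (ω : Module.Dual ℂ (Mspace β k m)),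
      (∀ j, 1 ≤ j → j ≤ m - 1 → ω (ee (k + (j + 1))) * cc (k + j) = μ * ω (ee (k + j))) →
      ∀ j, 1 ≤ j → j ≤ m → W j * ω (ee (k + j)) = μ ^ (j - 1) * ω (ee (k + 1)) := by
    intro μ ω hrel j hj1
    induction j, hj1 using Nat.le_induction with
    | base => intro _; norm_num [hW1]
    | succ j hj ih =>
      intro hjm
      have h1 := hrel j hj (by omega)
      have h2 := ih (by omega)
      rw [hWstep j hj]
      calc W j * cc (k + j) * ω (ee (k + (j + 1)))
          = W j * (ω (ee (k + (j + 1))) * cc (k + j)) := by ring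
        _ = W j * (μ * ω (ee (k + j))) := by rw [h1]
        _ = μ * (W j * ω (ee (k + j))) := by ring
        _ = μ * (μ ^ (j - 1) * ω (ee (k + 1))) := by rw [h2]
        _ = μ ^ (j + 1 - 1) * ω (ee (k + 1)) := by
            rw [show j + 1 - 1 = (j - 1) + 1 by omega, pow_succ]
            ring
  have hzeroω : ∀ ω : Module.Dual ℂ (Mspace β k m),
      (∀ x : Mspace β k m, (x : Eseq) ∈ Mspace β k m' → ω x = 0) →
      (∀ j, 1 ≤ j → j ≤ m → ω (ee (k + j)) = 0) → ω = 0 := by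
    intro ω hω hb
    apply LinearMap.ext
    intro x
    rw [hrepr ω hω x]
    simp only [LinearMap.zero_apply]
    exact Finset.sum_eq_zero fun j hj => by
      rw [hb j (Finset.mem_Icc.mp hj).1 (Finset.mem_Icc.mp hj).2, zero_mul]
  -- functionals given by coordinates
  have hann_coordSum : ∀ b : ℕ → ℂ,
      (∀ r, 1 ≤ r → r ≤ m' → ∑ s ∈ Finset.range n, b (r + s * m') = 0) →
      ∀ x : Mspace β k m, (x : Eseq) ∈ Mspace β k m' → coordSum β k m b x = 0 := by
    intro b hbres x hx
    obtain ⟨⟨_, hxP'⟩, _⟩ := mem_M_iff.mp hx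
    rw [coordSum_apply]
    have hsplit := sum_Icc_split (fun j => b j * (x : Eseq) (k + j)) m' n
    rw [← hmn] at hsplit
    rw [hsplit]
    refine Finset.sum_eq_zero fun r hr => ?_
    obtain ⟨hr1, hr2⟩ := Finset.mem_Icc.mp hr
    have hxper : ∀ s : ℕ, (x : Eseq) (k + (r + s * m')) = (x : Eseq) (k + r) := by
      intro s
      have h := tail_per hxP' (r - 1) s
      rw [show k + 1 + (r - 1) = k + r by omega] at h
      rw [show k + (r + s * m') = k + r + s * m' by ring]
      exact h
    calc ∑ s ∈ Finset.range n, b (r + s * m') * (x : Eseq) (k + (r + s * m'))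
        = ∑ s ∈ Finset.range n, b (r + s * m') * (x : Eseq) (k + r) :=
          Finset.sum_congr rfl fun s _ => by rw [hxper s]
      _ = (∑ s ∈ Finset.range n, b (r + s * m')) * (x : Eseq) (k + r) := by
          rw [Finset.sum_mul]
      _ = 0 := by rw [hbres r hr1 hr2, zero_mul]
  have hcsc : ∀ (b : ℕ → ℂ) (j : ℕ), 1 ≤ j → j ≤ m → coordSum β k m b (ee (k + j)) = b j := by
    intro b j hj1 hj2
    rw [coordSum_apply]
    rw [Finset.sum_eq_single_of_mem j (Finset.mem_Icc.mpr ⟨hj1, hj2⟩) (fun j' hj' hne => by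
      rw [hval (k + j) j' (Finset.mem_Icc.mp hj').1 (Finset.mem_Icc.mp hj').2,
        if_neg (by omega), mul_zero])]
    rw [hval (k + j) j hj1 hj2, if_pos rfl, mul_one]
  have heig_coordSum : ∀ (μ : ℂ) (b : ℕ → ℂ),
      (∀ r, 1 ≤ r → r ≤ m' → ∑ s ∈ Finset.range n, b (r + s * m') = 0) →
      (∀ j, 1 ≤ j → j ≤ m - 1 → b (j + 1) * cc (k + j) = μ * b j) →
      b 1 * cc (k + m') = μ * b m →
      L.dualMap (coordSum β k m b) = μ • coordSum β k m b := by
    intro μ b hbres hrel1 hrelw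
    apply LinearMap.ext
    intro x
    have hLx : (L.dualMap (coordSum β k m b)) x = coordSum β k m b (L x) := rfl
    rw [hLx, hωL (coordSum β k m b) (hann_coordSum b hbres) x]
    have h1 : ∀ j ∈ Finset.Icc 1 (m - 1),
        (coordSum β k m b (ee (k + (j + 1))) * cc (k + j)) * (x : Eseq) (k + j)
        = μ * (b j * (x : Eseq) (k + j)) := by
      intro j hj
      obtain ⟨hj1, hj2⟩ := Finset.mem_Icc.mp hj
      rw [hcsc b (j + 1) (by omega) (by omega), hrel1 j hj1 hj2]
      ring
    have h2 : (coordSum β k m b (ee (k + 1)) * cc (k + m')) * (x : Eseq) (k + m)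
        = μ * (b m * (x : Eseq) (k + m)) := by
      rw [hcsc b 1 (by omega) (by omega), hrelw]
      ring
    rw [Finset.sum_congr rfl h1, h2]
    have hRHS : (μ • coordSum β k m b) x = μ * ∑ j ∈ Finset.Icc 1 m, b j * (x : Eseq) (k + j) := rfl
    rw [hRHS]
    rw [show Finset.Icc 1 m = insert m (Finset.Icc 1 (m - 1)) from by
      ext a; simp only [Finset.mem_insert, Finset.mem_Icc]; omega]
    rw [Finset.sum_insert (by simp only [Finset.mem_Icc]; omega), mul_add, Finset.mul_sum]
    ring
  -- the explicit eigen-coordinates for a good eigenvalue μ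
  have hgoodb : ∀ μ : ℂ, μ ^ m = lam ^ n → μ ^ m' ≠ lam →
      (∀ r, 1 ≤ r → r ≤ m' →
          ∑ s ∈ Finset.range n, (μ ^ (r + s * m' - 1) / W (r + s * m')) = 0)
      ∧ (∀ j, 1 ≤ j → j ≤ m - 1 →
          (μ ^ (j + 1 - 1) / W (j + 1)) * cc (k + j) = μ * (μ ^ (j - 1) / W j))
      ∧ (μ ^ (1 - 1) / W 1) * cc (k + m') = μ * (μ ^ (m - 1) / W m) := by
    intro μ hμm hμm'
    have hμ0 : μ ≠ 0 := by
      intro h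
      rw [h, zero_pow (by omega)] at hμm
      exact pow_ne_zero n hlamnz hμm.symm
    refine ⟨?_, ?_, ?_⟩
    · intro r hr1 hr2
      set ρ : ℂ := μ ^ m' / lam with hρ
      have hρn : ρ ^ n = 1 := by
        rw [hρ, div_pow, ← pow_mul, show m' * n = m by omega, hμm, div_self]
        exact pow_ne_zero n hlamnz
      have hρ1 : ρ ≠ 1 := by
        intro h
        rw [hρ, div_eq_one_iff_eq hlamnz] at h
        exact hμm' h
      have hterm : ∀ s : ℕ, μ ^ (r + s * m' - 1) / W (r + s * m')
          = (μ ^ (r - 1) / W r) * ρ ^ s := by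
        intro s
        rw [hWshiftpow r hr1 s, hρ, div_pow, ← pow_mul]
        rw [show r + s * m' - 1 = (r - 1) + m' * s by
          have : m' * s = s * m' := Nat.mul_comm m' s
          omega]
        rw [pow_add]
        field_simp
      rw [Finset.sum_congr rfl fun s _ => hterm s, ← Finset.mul_sum,
        geom_helper hρn hρ1, mul_zero]
    · intro j hj1 hj2
      rw [hWstep j hj1]
      have h1 : μ ^ (j + 1 - 1) = μ * μ ^ (j - 1) := by
        rw [show j + 1 - 1 = (j - 1) + 1 by omega, pow_succ]
        ring
      rw [h1]
      have hWj := hWnz j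
      have hWj2 := hccnz j hj1
      field_simp
    · have h1 : μ * μ ^ (m - 1) = μ ^ m := by
        rw [← pow_succ']
        congr 1
        omega
      rw [pow_zero, hW1, div_one, one_mul, mul_div_assoc', h1, hμm, ← hWm1,
        hWstep m (by omega), hccm]
      rw [mul_comm (W m) (cc (k + m')), mul_div_assoc, div_self (hWnz m), mul_one]

  -- the eigenfunctional attached to a good eigenvalue
  have hgoodω : ∀ μ : ℂ, μ ^ m = lam ^ n → μ ^ m' ≠ lam →
      (coordSum β k m (fun j => μ ^ (j - 1) / W j))
          ∈ (Submodule.comap (Mspace β k m).subtype (Mspace β k m')).dualAnnihilator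
      ∧ coordSum β k m (fun j => μ ^ (j - 1) / W j) ≠ 0
      ∧ L.dualMap (coordSum β k m (fun j => μ ^ (j - 1) / W j))
          = μ • coordSum β k m (fun j => μ ^ (j - 1) / W j) := by
    intro μ h1 h2
    obtain ⟨hb1, hb2, hb3⟩ := hgoodb μ h1 h2
    refine ⟨(hannmem _).mpr (hann_coordSum _ hb1), ?_, heig_coordSum μ _ hb1 hb2 hb3⟩
    intro h0
    have hcv := hcsc (fun j => μ ^ (j - 1) / W j) 1 le_rfl (by omega)
    rw [h0] at hcv
    simp [hW1] at hcv
  refine ⟨?_, ?_, ?_⟩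
  · -- Goal 1 : the spectrum
    ext μ
    simp only [Set.mem_setOf_eq, hndiv]
    constructor
    · rintro ⟨ω, hωA, hω0, heig⟩
      have hωP := (hannmem ω).mp hωA
      obtain ⟨hrel1, hrelw⟩ := hextract μ ω hωP heig
      have hWb := hWbgen μ ω hrel1
      have hb1 : ω (ee (k + 1)) ≠ 0 := by
        intro h0
        refine hω0 (hzeroω ω hωP fun j hj1 hj2 => ?_)
        have h := hWb j hj1 hj2
        rw [h0, mul_zero] at h
        exact (mul_eq_zero.mp h).resolve_left (hWnz j)
      constructor
      · have h1 := hWb m (by omega) le_rfl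
        have hμm : lam ^ n * ω (ee (k + 1)) = μ ^ m * ω (ee (k + 1)) := by
          calc lam ^ n * ω (ee (k + 1))
              = W (m + 1) * ω (ee (k + 1)) := by rw [hWm1]
            _ = W m * (ω (ee (k + 1)) * cc (k + m')) := by
                rw [hWstep m (by omega), hccm]; ring
            _ = W m * (μ * ω (ee (k + m))) := by rw [hrelw]
            _ = μ * (W m * ω (ee (k + m))) := by ring
            _ = μ * (μ ^ (m - 1) * ω (ee (k + 1))) := by rw [h1]
            _ = μ ^ m * ω (ee (k + 1)) := by
                rw [← mul_assoc, ← pow_succ', show m - 1 + 1 = m by omega]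
        exact (mul_right_cancel₀ hb1 hμm).symm
      · intro hμm'
        apply hb1
        have hress := hres ω hωP 1 le_rfl hm'
        have hbs : ∀ s ∈ Finset.range n, ω (ee (k + (1 + s * m'))) = ω (ee (k + 1)) := by
          intro s hs
          have hs' := Finset.mem_range.mp hs
          have hle : 1 + s * m' ≤ m := by
            have h5 : (s + 1) * m' ≤ n * m' := Nat.mul_le_mul_right m' (by omega)
            have h6 : (s + 1) * m' = s * m' + m' := by ring
            have hcomm : m' * n = n * m' := Nat.mul_comm m' n
            omega
          have h1 := hWb (1 + s * m') (by omega) hle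
          rw [hWpow s, show 1 + s * m' - 1 = m' * s by
              have : m' * s = s * m' := Nat.mul_comm m' s
              omega,
            pow_mul, hμm'] at h1
          exact mul_left_cancel₀ (pow_ne_zero s hlamnz) h1
        rw [Finset.sum_congr rfl hbs, Finset.sum_const, Finset.card_range, nsmul_eq_mul] at hress
        have hn0 : (n : ℂ) ≠ 0 := Nat.cast_ne_zero.mpr (by omega)
        exact (mul_eq_zero.mp hress).resolve_left hn0
    · rintro ⟨h1, h2⟩
      obtain ⟨hA, h0, hei⟩ := hgoodω μ h1 h2
      exact ⟨_, hA, h0, hei⟩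
  · -- Goal 2 : the span of eigenfunctionals
    refine le_antisymm (Submodule.span_le.mpr fun ω' hω' => hω'.1) ?_
    intro ω hωA
    have hωP := (hannmem ω).mp hωA
    obtain ⟨ζ, hζ⟩ : ∃ ζ : ℂ, IsPrimitiveRoot ζ m :=
      ⟨_, Complex.isPrimitiveRoot_exp m (by omega)⟩
    obtain ⟨μ₀, hμ₀⟩ := IsAlgClosed.exists_pow_nat_eq (lam ^ n) (show 0 < m by omega)
    set μt : ℕ → ℂ := fun t => μ₀ * ζ ^ t with hμt
    have hζ0 : ζ ≠ 0 := hζ.ne_zero (by omega)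
    have hμ₀0 : μ₀ ≠ 0 := by
      intro h
      rw [h, zero_pow (by omega)] at hμ₀
      exact pow_ne_zero n hlamnz hμ₀.symm
    have hμtm : ∀ t, μt t ^ m = lam ^ n := by
      intro t
      simp only [hμt]
      rw [mul_pow, ← pow_mul, mul_comm t m, pow_mul, hζ.pow_eq_one, one_pow, mul_one, hμ₀]
    have hμt0 : ∀ t, μt t ≠ 0 := fun t => mul_ne_zero hμ₀0 (pow_ne_zero t hζ0)
    have hm0 : (m : ℂ) ≠ 0 := Nat.cast_ne_zero.mpr (by omega)
    -- orthogonality of the characters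
    have horth : ∀ i j, i < m → j < m →
        ∑ t ∈ Finset.range m, (ζ ^ i * (ζ ^ j)⁻¹) ^ t = if i = j then (m : ℂ) else 0 := by
      intro i j hi hj
      by_cases hij : i = j
      · subst hij
        rw [if_pos rfl, mul_inv_cancel₀ (pow_ne_zero i hζ0)]
        simp
      · rw [if_neg hij]
        refine geom_helper ?_ ?_
        · rw [mul_pow, inv_pow, ← pow_mul, ← pow_mul, mul_comm i m, mul_comm j m,
            pow_mul, pow_mul, hζ.pow_eq_one, one_pow, one_pow, inv_one, mul_one]
        · intro hEq
          rw [mul_inv_eq_one₀ (pow_ne_zero j hζ0)] at hEq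
          exact hij (hζ.pow_inj hi hj hEq)
    have hpowsplit : ∀ (t i j : ℕ), μt t ^ i * (μt t ^ j)⁻¹
        = (μ₀ ^ i * (μ₀ ^ j)⁻¹) * (ζ ^ i * (ζ ^ j)⁻¹) ^ t := by
      intro t i j
      simp only [hμt]
      simp only [mul_pow, mul_inv]
      rw [pow_right_comm ζ t i, pow_right_comm ζ t j, inv_pow]
      ring
    -- Fourier coefficients
    set aa : ℕ → ℂ := fun j => W j * ω (ee (k + j)) with haa
    set c : ℕ → ℂ := fun t => (m : ℂ)⁻¹ * ∑ j ∈ Finset.Icc 1 m, aa j * (μt t ^ (j - 1))⁻¹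
      with hcdef
    have hinterp : ∀ i, 1 ≤ i → i ≤ m →
        ∑ t ∈ Finset.range m, c t * μt t ^ (i - 1) = aa i := by
      intro i hi1 hi2
      have step1 : ∀ t : ℕ, c t * μt t ^ (i - 1)
          = (m : ℂ)⁻¹ * ∑ j ∈ Finset.Icc 1 m, aa j * (μt t ^ (i - 1) * (μt t ^ (j - 1))⁻¹) := by
        intro t
        calc c t * μt t ^ (i - 1)
            = (m : ℂ)⁻¹ * ((∑ j ∈ Finset.Icc 1 m, aa j * (μt t ^ (j - 1))⁻¹) * μt t ^ (i - 1)) := by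
              simp only [hcdef]; ring
          _ = (m : ℂ)⁻¹ * ∑ j ∈ Finset.Icc 1 m, aa j * (μt t ^ (i - 1) * (μt t ^ (j - 1))⁻¹) := by
              rw [Finset.sum_mul]
              congr 1
              exact Finset.sum_congr rfl fun j _ => by ring
      rw [Finset.sum_congr rfl fun t _ => step1 t, ← Finset.mul_sum, Finset.sum_comm]
      have hinner : ∀ j, 1 ≤ j → j ≤ m →
          ∑ t ∈ Finset.range m, μt t ^ (i - 1) * (μt t ^ (j - 1))⁻¹
          = if i = j then (μ₀ ^ (i - 1) * (μ₀ ^ (j - 1))⁻¹) * (m : ℂ) else 0 := by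
        intro j hj1 hj2
        rw [Finset.sum_congr rfl fun t _ => hpowsplit t (i - 1) (j - 1), ← Finset.mul_sum,
          horth (i - 1) (j - 1) (by omega) (by omega)]
        by_cases hij : i = j
        · rw [if_pos (by omega : i - 1 = j - 1), if_pos hij]
        · rw [if_neg (by omega : ¬ i - 1 = j - 1), if_neg hij, mul_zero]
      rw [Finset.sum_congr rfl (fun j hj => by
        rw [← Finset.mul_sum, hinner j (Finset.mem_Icc.mp hj).1 (Finset.mem_Icc.mp hj).2])]
      rw [Finset.sum_eq_single_of_mem i (Finset.mem_Icc.mpr ⟨hi1, hi2⟩) (fun j hj hne => by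
        rw [if_neg (fun h => hne h.symm), mul_zero])]
      rw [if_pos rfl, mul_inv_cancel₀ (pow_ne_zero _ hμ₀0), one_mul]
      field_simp
    -- residue relations for the Fourier data
    have hresa : ∀ r, 1 ≤ r → r ≤ m' →
        ∑ s ∈ Finset.range n, aa (r + s * m') * lam ^ (n - 1 - s) = 0 := by
      intro r hr1 hr2
      have h0 := hres ω hωP r hr1 hr2
      have hstep : ∀ s ∈ Finset.range n, aa (r + s * m') * lam ^ (n - 1 - s)
          = (W r * lam ^ (n - 1)) * ω (ee (k + (r + s * m'))) := by
        intro s hs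
        have hs' := Finset.mem_range.mp hs
        simp only [haa]
        rw [hWshiftpow r hr1 s,
          show lam ^ (n - 1) = lam ^ s * lam ^ (n - 1 - s) by rw [← pow_add]; congr 1; omega]
        ring
      rw [Finset.sum_congr rfl hstep, ← Finset.mul_sum, h0, mul_zero]
    -- the Fourier coefficients vanish at the bad roots
    have hckill : ∀ t₀, μt t₀ ^ m' = lam → c t₀ = 0 := by
      intro t₀ hbad
      have hQ : ∑ j ∈ Finset.Icc 1 m, aa j * (μt t₀ ^ (j - 1))⁻¹ = 0 := by
        have hsplit := sum_Icc_split (fun j => aa j * (μt t₀ ^ (j - 1))⁻¹) m' n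
        rw [← hmn] at hsplit
        rw [hsplit]
        refine Finset.sum_eq_zero fun r hr => ?_
        obtain ⟨hr1, hr2⟩ := Finset.mem_Icc.mp hr
        have hterm : ∀ s ∈ Finset.range n, aa (r + s * m') * (μt t₀ ^ (r + s * m' - 1))⁻¹
            = ((μt t₀ ^ (r - 1))⁻¹ * (lam ^ (n - 1))⁻¹)
              * (aa (r + s * m') * lam ^ (n - 1 - s)) := by
          intro s hs
          have hs' := Finset.mem_range.mp hs
          have hpow : μt t₀ ^ (r + s * m' - 1) = μt t₀ ^ (r - 1) * lam ^ s := by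
            rw [show r + s * m' - 1 = (r - 1) + m' * s by
                have : m' * s = s * m' := Nat.mul_comm m' s
                omega, pow_add, pow_mul, hbad]
          have hlp : lam ^ (n - 1) = lam ^ (n - 1 - s) * lam ^ s := by
            rw [← pow_add]; congr 1; omega
          rw [hpow, hlp]
          have h1 := pow_ne_zero (r - 1) (hμt0 t₀)
          have h2 := pow_ne_zero s hlamnz
          have h3 := pow_ne_zero (n - 1 - s) hlamnz
          field_simp
        rw [Finset.sum_congr rfl hterm, ← Finset.mul_sum, hresa r hr1 hr2, mul_zero]
      simp only [hcdef]
      rw [hQ, mul_zero]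
    -- decomposition of ω as a combination of eigenfunctionals
    have hωeq : ω = ∑ t ∈ Finset.range m,
        coordSum β k m (fun j => c t * (μt t ^ (j - 1) / W j)) := by
      apply LinearMap.ext
      intro x
      rw [hrepr ω hωP x]
      have hap : (∑ t ∈ Finset.range m,
            coordSum β k m (fun j => c t * (μt t ^ (j - 1) / W j))) x
          = ∑ t ∈ Finset.range m, ∑ j ∈ Finset.Icc 1 m,
              (c t * (μt t ^ (j - 1) / W j)) * (x : Eseq) (k + j) := by
        rw [LinearMap.sum_apply]
        exact Finset.sum_congr rfl fun t _ => rfl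
      rw [hap, Finset.sum_comm]
      refine Finset.sum_congr rfl fun j hj => ?_
      obtain ⟨hj1, hj2⟩ := Finset.mem_Icc.mp hj
      have h1 : ∑ t ∈ Finset.range m, (c t * (μt t ^ (j - 1) / W j)) * (x : Eseq) (k + j)
          = ((∑ t ∈ Finset.range m, c t * μt t ^ (j - 1)) / W j) * (x : Eseq) (k + j) := by
        rw [Finset.sum_div, Finset.sum_mul]
        exact Finset.sum_congr rfl fun t _ => by ring
      rw [h1, hinterp j hj1 hj2]
      simp only [haa]
      rw [mul_comm (W j) _, mul_div_assoc, div_self (hWnz j), mul_one]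
    rw [hωeq]
    refine Submodule.sum_mem _ fun t ht => ?_
    by_cases hct : c t = 0
    · have hzero : coordSum β k m (fun j => c t * (μt t ^ (j - 1) / W j)) = 0 := by
        apply LinearMap.ext
        intro x
        rw [coordSum_apply]
        simp [hct]
      rw [hzero]
      exact Submodule.zero_mem _
    · have hgood : μt t ^ m' ≠ lam := fun h => hct (hckill t h)
      have hsm : coordSum β k m (fun j => c t * (μt t ^ (j - 1) / W j))
          = c t • coordSum β k m (fun j => μt t ^ (j - 1) / W j) := by
        apply LinearMap.ext
        intro x
        rw [coordSum_apply]
        have h2 : (c t • coordSum β k m (fun j => μt t ^ (j - 1) / W j)) x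
            = c t * ∑ j ∈ Finset.Icc 1 m, (μt t ^ (j - 1) / W j) * (x : Eseq) (k + j) := rfl
        rw [h2, Finset.mul_sum]
        exact Finset.sum_congr rfl fun j _ => by ring
      rw [hsm]
      refine Submodule.smul_mem _ _ (Submodule.subset_span ?_)
      exact ⟨(hgoodω (μt t) (hμtm t) hgood).1, μt t, (hgoodω (μt t) (hμtm t) hgood).2.2⟩

  · -- Goal 3 : simple eigenvalues
    intro μ ω₁ ω₂ hA1 hA2 he1 he2 hne1
    have hP1 := (hannmem ω₁).mp hA1
    have hP2 := (hannmem ω₂).mp hA2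
    obtain ⟨hrel1, _⟩ := hextract μ ω₁ hP1 he1
    obtain ⟨hrel2, _⟩ := hextract μ ω₂ hP2 he2
    have hWb1 := hWbgen μ ω₁ hrel1
    have hWb2 := hWbgen μ ω₂ hrel2
    have hb1 : ω₁ (ee (k + 1)) ≠ 0 := by
      intro h0
      refine hne1 (hzeroω ω₁ hP1 fun j hj1 hj2 => ?_)
      have h := hWb1 j hj1 hj2
      rw [h0, mul_zero] at h
      exact (mul_eq_zero.mp h).resolve_left (hWnz j)
    refine ⟨ω₂ (ee (k + 1)) / ω₁ (ee (k + 1)), ?_⟩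
    apply LinearMap.ext
    intro x
    rw [hrepr ω₂ hP2 x]
    have hRHS : ((ω₂ (ee (k + 1)) / ω₁ (ee (k + 1))) • ω₁) x
        = ω₂ (ee (k + 1)) / ω₁ (ee (k + 1)) * ω₁ x := rfl
    rw [hRHS, hrepr ω₁ hP1 x, Finset.mul_sum]
    refine Finset.sum_congr rfl fun j hj => ?_
    obtain ⟨hj1, hj2⟩ := Finset.mem_Icc.mp hj
    have h1 := hWb1 j hj1 hj2
    have h2 := hWb2 j hj1 hj2
    have key : ω₂ (ee (k + j)) = ω₂ (ee (k + 1)) / ω₁ (ee (k + 1)) * ω₁ (ee (k + j)) := by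
      apply mul_left_cancel₀ (hWnz j)
      rw [h2, show W j * (ω₂ (ee (k + 1)) / ω₁ (ee (k + 1)) * ω₁ (ee (k + j)))
          = ω₂ (ee (k + 1)) / ω₁ (ee (k + 1)) * (W j * ω₁ (ee (k + j))) by ring, h1]
      field_simp
    rw [key]
    ring
end
end
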